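/- arXiv:2204.10229 — 7 statements merged into one kernel-verified Lean document; each statement's English description precedes it below -/
import Mathlib

section
/- If U₁ ∈ ℂ_p^{I×I} and U₂ ∈ ℂ_p^{J×J} are unitary tubal matrices, then their Kronecker product U₁ ⊗_t U₂ ∈ ℂ_p^{(I×J)×(I×J)} is a unitary tubal matrix. -/
/-!
STATEMENT 6: the Kronecker product of unitary tubal matrices is unitary.

-/

open scoped BigOperators

/-- Tubal scalars of length `p`: vectors in `ℂ^p`. -/
abbrev TubalScalar (p : ℕ) := Fin p → ℂ

variable {p : ℕ}

/-- Tensor-tensor product of tubal scalars with respect to the invertible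
linear transformation `L`: `a * b := L⁻¹(L a ⊙ L b)`. -/
noncomputable def tmul (L : TubalScalar p ≃ₗ[ℂ] TubalScalar p) (a b : TubalScalar p) :
    TubalScalar p :=
  L.symm (L a * L b)

/-- Tensor-tensor product of tubal matrices: `(A*B)(i,k) := Σ_j A(i,j)*B(j,k)`. -/
noncomputable def tMul {I J K : Type*} [Fintype J] (L : TubalScalar p ≃ₗ[ℂ] TubalScalar p)
    (A : I → J → TubalScalar p) (B : J → K → TubalScalar p) : I → K → TubalScalar p :=
  fun i k => ∑ j, tmul L (A i j) (B j k)

/-- The small-t (face-wise) transpose: `A^t(j,i) := A(i,j)`. -/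
def tTrans {I J : Type*} (A : I → J → TubalScalar p) : J → I → TubalScalar p :=
  fun j i => A i j
/-- Hermitian transpose: `(L(A^H))^{(k)} = (L(A)^{(k)})^H`, i.e. entrywise
`A^H(j,i) = L⁻¹(conj(L(A(i,j))))`. -/
noncomputable def tHerm {I J : Type*} (L : TubalScalar p ≃ₗ[ℂ] TubalScalar p)
    (A : I → J → TubalScalar p) : J → I → TubalScalar p :=
  fun j i => L.symm (star (L (A i j)))

/-- The identity tubal matrix: `e = L⁻¹((1,…,1))` on the diagonal, zero elsewhere. -/
noncomputable def tId {I : Type*} [DecidableEq I] (L : TubalScalar p ≃ₗ[ℂ] TubalScalar p) :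
    I → I → TubalScalar p :=
  fun i j => if i = j then L.symm 1 else 0

/-- A square tubal matrix is unitary if `A*A^H = A^H*A = 𝓘`. -/
noncomputable def tUnitary {I : Type*} [Fintype I] [DecidableEq I]
    (L : TubalScalar p ≃ₗ[ℂ] TubalScalar p) (A : I → I → TubalScalar p) : Prop :=
  tMul L A (tHerm L A) = tId L ∧ tMul L (tHerm L A) A = tId L
/-- The (tensor-tensor product based) Kronecker product of tubal matrices:
rows indexed by pairs `(i,k) ∈ I×K`, columns by pairs `(j,l) ∈ J×L'`, with
`((i,k),(j,l))` entry `A(i,j)*B(k,l)`. -/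
noncomputable def tKron {I J K L' : Type*} (L : TubalScalar p ≃ₗ[ℂ] TubalScalar p)
    (A : I → J → TubalScalar p) (B : K → L' → TubalScalar p) :
    I × K → J × L' → TubalScalar p :=
  fun ik jl => tmul L (A ik.1 jl.1) (B ik.2 jl.2)

lemma tHerm_tKron {I J K L' : Type*} (L : TubalScalar p ≃ₗ[ℂ] TubalScalar p)
    (A : I → J → TubalScalar p) (B : K → L' → TubalScalar p) :
    tHerm L (tKron L A B) = tKron L (tHerm L A) (tHerm L B) := by
  funext x y
  simp [tHerm, tKron, tmul, star_mul']

lemma tMul_tKron {I J K I' J' K' : Type*} [Fintype J] [Fintype J']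
    (L : TubalScalar p ≃ₗ[ℂ] TubalScalar p)
    (A : I → J → TubalScalar p) (B : J → K → TubalScalar p)
    (A' : I' → J' → TubalScalar p) (B' : J' → K' → TubalScalar p) :
    tMul L (tKron L A A') (tKron L B B') = tKron L (tMul L A B) (tMul L A' B') := by
  funext x y
  apply L.injective
  simp only [tMul, tKron, tmul, map_sum, LinearEquiv.apply_symm_apply]
  rw [Fintype.sum_prod_type, Finset.sum_mul_sum]
  exact Finset.sum_congr rfl fun m _ => Finset.sum_congr rfl fun n _ => by ring

lemma tKron_tId {I J : Type*} [DecidableEq I] [DecidableEq J]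
    (L : TubalScalar p ≃ₗ[ℂ] TubalScalar p) :
    tKron L (tId L (I := I)) (tId L (I := J)) = tId L := by
  funext x y
  simp only [tKron, tId, tmul, Prod.ext_iff]
  split_ifs with h1 h2 h2 <;> simp_all

/-- If `U₁ ∈ ℂ_p^{I×I}` and `U₂ ∈ ℂ_p^{J×J}` are unitary tubal matrices, then their
Kronecker product `U₁ ⊗_t U₂ ∈ ℂ_p^{(I×J)×(I×J)}` is a unitary tubal matrix. -/
theorem tUnitary_tKron {I J : Type*} [Fintype I] [DecidableEq I] [Fintype J] [DecidableEq J]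
    (L : TubalScalar p ≃ₗ[ℂ] TubalScalar p)
    (U₁ : I → I → TubalScalar p) (U₂ : J → J → TubalScalar p)
    (h₁ : tUnitary L U₁) (h₂ : tUnitary L U₂) :
    tUnitary L (tKron L U₁ U₂) := by
  rcases h₁ with ⟨h₁a, h₁b⟩
  rcases h₂ with ⟨h₂a, h₂b⟩
  constructor
  · rw [tHerm_tKron, tMul_tKron, h₁a, h₂a, tKron_tId]
  · rw [tHerm_tKron, tMul_tKron, h₁b, h₂b, tKron_tId]
end

section
/- Existence of Hot-SVD: every tubal tensor A ∈ ℂ_p^{I₁×⋯×I_N} can be written as A = S *₁ U₁ *₂ U₂ ⋯ *_N U_N, where each U_n ∈ ℂ_p^{I_n×I_n} is a unitary tubal matrix and the core S ∈ ℂ_p^{I₁×⋯×I_N} is all-orthogonal: for all 1 ≤ n ≤ N and all 1 ≤ α ≠ β ≤ I_n, the sum over i₁,…,i_{n−1},i_{n+1},…,i_N of S(i₁,…,i_{n−1},α,i_{n+1},…,i_N)^H * S(i₁,…,i_{n−1},β,i_{n+1},…,i_N) equals the zero tubal scalar. Moreover, if L = c·W with c ∈ ℂ nonzero and W : ℂ^p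 → ℂ^p unitary for the standard Hermitian inner product, the decomposition can be chosen so that in addition, for every n, ‖S_{i_n=1}‖ ≥ ‖S_{i_n=2}‖ ≥ ⋯ ≥ ‖S_{i_n=I_n}‖, where S_{i_n=α} is the subtensor of S with n-th index fixed to α and ‖·‖ is the Frobenius norm. -/
/-!
STATEMENT 11: Existence of Hot-SVD: every tubal tensor A ∈ ℂ_p^{I₁×⋯×I_N} can be
written as A = S *₁ U₁ ⋯ *_N U_N with each U_n unitary and S all-orthogonal; if
moreover L = c·W with c ≠ 0 and W unitary for the standard Hermitian inner product,
the decomposition can be chosen so that in addition the slice norms of S are ordered.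
-/

open scoped BigOperators

variable {p : ℕ}

/-- The `n`-mode product of a tubal tensor `A` of shape `I : Fin N → ℕ` with a tubal
matrix `U ∈ ℂ_p^{J×I_n}`:
`(A *_n U)(i₁,…,i_{n−1},j,i_{n+1},…,i_N) = Σ_{i_n} A(i₁,…,i_N)*U(j,i_n)`. -/
noncomputable def modeProd {N : ℕ} (L : TubalScalar p ≃ₗ[ℂ] TubalScalar p) (I : Fin N → ℕ)
    (A : ((m : Fin N) → Fin (I m)) → TubalScalar p) (n : Fin N) (J : ℕ)
    (U : Fin J → Fin (I n) → TubalScalar p) :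
    ((m : Fin N) → Fin (Function.update I n J m)) → TubalScalar p :=
  fun idx => ∑ i : Fin (I n),
    tmul L
      (A fun m =>
        if h : m = n then Fin.cast (congrArg I h).symm i
        else Fin.cast (by rw [Function.update_of_ne h]) (idx m))
      (U (Fin.cast (by rw [Function.update_self]) (idx n)) i)

/-- The column index type of the mode-`n` unfolding: tuples
`(i₁,…,i_{n−1},i_{n+1},…,i_N)` ranging over all modes other than `n`. -/
abbrev Cidx {N : ℕ} (I : Fin N → ℕ) (n : Fin N) :=
  (m : {m : Fin N // m ≠ n}) → Fin (I m.1)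

/-- Insert the value `a` at position `n` into a tuple `c` over the remaining modes,
producing a full multi-index `(i₁,…,i_{n−1},a,i_{n+1},…,i_N)`. -/
def insertAt {N : ℕ} {I : Fin N → ℕ} (n : Fin N) (a : Fin (I n)) (c : Cidx I n) :
    (m : Fin N) → Fin (I m) :=
  fun m => if h : m = n then Fin.cast (congrArg I h).symm a else c ⟨m, h⟩

/-- The mode-`n` unfolding of a tubal tensor: the tubal matrix with rows indexed by
`i_n`, columns indexed by the tuples over the remaining modes, and entry
`A_(n)(i_n,(i₁,…,i_{n−1},i_{n+1},…,i_N)) = A(i₁,…,i_N)`. -/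
def unfold {N : ℕ} (I : Fin N → ℕ) (A : ((m : Fin N) → Fin (I m)) → TubalScalar p)
    (n : Fin N) : Fin (I n) → Cidx I n → TubalScalar p :=
  fun a c => A (insertAt n a c)

/-- The full multilinear tubal product `S *₁ U₁ *₂ U₂ ⋯ *_N U_N`, given entrywise by
`(S *₁ U₁ ⋯ *_N U_N)(i₁,…,i_N) = Σ_{j₁,…,j_N} S(j₁,…,j_N)*U₁(i₁,j₁)*⋯*U_N(i_N,j_N)`
(the tensor-tensor products of the tubal scalars are computed via `L`). -/
noncomputable def multiProd {N : ℕ} (L : TubalScalar p ≃ₗ[ℂ] TubalScalar p)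
    (I J : Fin N → ℕ) (S : ((m : Fin N) → Fin (I m)) → TubalScalar p)
    (U : (n : Fin N) → Fin (J n) → Fin (I n) → TubalScalar p) :
    ((m : Fin N) → Fin (J m)) → TubalScalar p :=
  fun idx => ∑ jdx : (m : Fin N) → Fin (I m),
    L.symm (L (S jdx) * ∏ n : Fin N, L (U n (idx n) (jdx n)))
/-- Hermitian transpose of a tubal scalar: `(L(a^H))^{(k)} = conj(L(a)^{(k)})`. -/
noncomputable def tstar (L : TubalScalar p ≃ₗ[ℂ] TubalScalar p) (a : TubalScalar p) :
    TubalScalar p :=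
  L.symm (star (L a))

/-- All-orthogonality of a core tubal tensor `S`: for all modes `n` and all
`α ≠ β`, `Σ S(…,α,…)^H * S(…,β,…) = 0`, the sum being over the remaining indices. -/
noncomputable def allOrth {N : ℕ} (L : TubalScalar p ≃ₗ[ℂ] TubalScalar p)
    (I : Fin N → ℕ) (S : ((m : Fin N) → Fin (I m)) → TubalScalar p) : Prop :=
  ∀ (n : Fin N) (a b : Fin (I n)), a ≠ b →
    ∑ c : Cidx I n, tmul L (tstar L (S (insertAt n a c))) (S (insertAt n b c)) = 0

/-- The Frobenius norm of the subtensor `S_{i_n = a}` of `S` obtained by fixing the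
`n`-th index to `a`. -/
noncomputable def sliceNorm {N : ℕ} (I : Fin N → ℕ)
    (S : ((m : Fin N) → Fin (I m)) → TubalScalar p) (n : Fin N) (a : Fin (I n)) : ℝ :=
  Real.sqrt (∑ c : Cidx I n, ∑ k : Fin p, ‖S (insertAt n a c) k‖ ^ 2)

/-- Ordering of the slice norms of the core: `‖S_{i_n=1}‖ ≥ ⋯ ≥ ‖S_{i_n=I_n}‖`. -/
noncomputable def ordering {N : ℕ} (I : Fin N → ℕ)
    (S : ((m : Fin N) → Fin (I m)) → TubalScalar p) : Prop :=
  ∀ (n : Fin N) (a b : Fin (I n)), a ≤ b → sliceNorm I S n b ≤ sliceNorm I S n a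


open scoped Matrix

section HotSVDHelpers

variable {N : ℕ} {I : Fin N → ℕ}

lemma insertAt_self (n : Fin N) (a : Fin (I n)) (c : Cidx I n) :
    insertAt n a c n = a := by
  simp [insertAt]

lemma insertAt_ne {n m : Fin N} (h : m ≠ n) (a : Fin (I n)) (c : Cidx I n) :
    insertAt n a c m = c ⟨m, h⟩ := by
  simp [insertAt, h]

/-- Splitting a full multi-index into its `n`-th component and the rest. -/
def splitEquivX (n : Fin N) : ((m : Fin N) → Fin (I m)) ≃ Fin (I n) × Cidx I n where
  toFun i := (i n, fun m => i m.1)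
  invFun x := insertAt n x.1 x.2
  left_inv i := by
    funext m
    by_cases h : m = n
    · subst h; exact insertAt_self ..
    · exact insertAt_ne h ..
  right_inv x := by
    refine Prod.ext (insertAt_self ..) ?_
    funext m
    exact insertAt_ne m.2 ..

@[simp] lemma splitEquivX_symm_apply (n : Fin N) (x : Fin (I n) × Cidx I n) :
    (splitEquivX n).symm x = insertAt n x.1 x.2 := rfl

lemma prod_insertAt (n : Fin N) (a : Fin (I n)) (c : Cidx I n)
    (f : (m : Fin N) → Fin (I m) → ℂ) :
    ∏ m, f m (insertAt n a c m)
      = f n a * ∏ m : {m : Fin N // m ≠ n}, f m.1 (c m) := by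
  rw [← Finset.mul_prod_erase Finset.univ _ (Finset.mem_univ n), insertAt_self]
  congr 1
  rw [Finset.prod_subtype (Finset.univ.erase n) (p := fun m => m ≠ n)
    (fun m => by simp)]
  exact Finset.prod_congr rfl fun m _ => by rw [insertAt_ne m.2]

lemma star_mul_self_eq_abs (z : ℂ) : star z * z = ((‖z‖ : ℝ) : ℂ)^2 := by
  rw [Complex.star_def, mul_comm, Complex.mul_conj, ← Complex.sq_norm]
  push_cast
  ring

lemma submatrix_mul_perm' {q r : ℕ} (A : Matrix (Fin q) (Fin r) ℂ) (B : Matrix (Fin r) (Fin q) ℂ)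
    (σ τ : Equiv.Perm (Fin q)) :
    A.submatrix ⇑σ id * B.submatrix id ⇑τ = (A * B).submatrix ⇑σ ⇑τ := by
  simpa using Matrix.submatrix_mul_equiv A B ⇑σ (Equiv.refl (Fin r)) ⇑τ

lemma exists_diagonalizer {q : ℕ} (G : Matrix (Fin q) (Fin q) ℂ) (hG : G.IsHermitian) :
    ∃ (V : Matrix (Fin q) (Fin q) ℂ) (d : Fin q → ℝ),
      V * Vᴴ = 1 ∧ Vᴴ * V = 1 ∧ Antitone d ∧
        Vᴴ * G * V = Matrix.diagonal (fun a => (d a : ℂ)) := by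
  classical
  obtain ⟨U, e, hU1, hU2, hdiag⟩ :
      ∃ (U : Matrix (Fin q) (Fin q) ℂ) (e : Fin q → ℝ), U * Uᴴ = 1 ∧ Uᴴ * U = 1 ∧
        Uᴴ * G * U = Matrix.diagonal (fun a => ((e a : ℝ) : ℂ)) := by
    refine ⟨(hG.eigenvectorUnitary : Matrix (Fin q) (Fin q) ℂ), hG.eigenvalues, ?_, ?_, ?_⟩
    · simpa [Matrix.star_eq_conjTranspose] using
        (Matrix.mem_unitaryGroup_iff.mp hG.eigenvectorUnitary.2)
    · simpa [Matrix.star_eq_conjTranspose] using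
        (Matrix.mem_unitaryGroup_iff'.mp hG.eigenvectorUnitary.2)
    · have := hG.conjStarAlgAut_star_eigenvectorUnitary
      rw [Unitary.conjStarAlgAut_apply] at this
      simpa [Matrix.star_eq_conjTranspose, Function.comp_def] using this
  set σ : Equiv.Perm (Fin q) := Tuple.sort (fun i => -e i) with hσ
  have hmono : Monotone ((fun i => -e i) ∘ σ) := Tuple.monotone_sort _
  refine ⟨U.submatrix id ⇑σ, e ∘ σ, ?_, ?_, ?_, ?_⟩
  · rw [Matrix.conjTranspose_submatrix,
      show (id : Fin q → Fin q) = ⇑(Equiv.refl (Fin q)) from rfl,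
      Matrix.submatrix_mul_equiv, hU1]
    simp
  · rw [Matrix.conjTranspose_submatrix, submatrix_mul_perm', hU2,
      Matrix.submatrix_one_equiv]
  · intro a b hab
    have := hmono hab
    simp only [Function.comp_apply, neg_le_neg_iff] at this
    exact this
  · rw [Matrix.conjTranspose_submatrix]
    have h1 : Uᴴ.submatrix ⇑σ id * G = (Uᴴ * G).submatrix ⇑σ id := by
      have := Matrix.submatrix_mul_equiv Uᴴ G ⇑σ (Equiv.refl (Fin q)) id
      simpa using this
    rw [h1, submatrix_mul_perm', hdiag]
    ext a b
    by_cases h : a = b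
    · subst h; simp
    · rw [Matrix.submatrix_apply,
        Matrix.diagonal_apply_ne _ (fun hc => h (σ.injective hc)),
        Matrix.diagonal_apply_ne _ h]

end HotSVDHelpers

set_option maxHeartbeats 1600000 in
/-- Existence of the Hot-SVD. -/
theorem exists_hotSVD {N : ℕ} (L : TubalScalar p ≃ₗ[ℂ] TubalScalar p)
    (I : Fin N → ℕ) (A : ((m : Fin N) → Fin (I m)) → TubalScalar p) :
    (∃ (S : ((m : Fin N) → Fin (I m)) → TubalScalar p)
        (U : (n : Fin N) → Fin (I n) → Fin (I n) → TubalScalar p),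
        A = multiProd L I I S U ∧ (∀ n, tUnitary L (U n)) ∧ allOrth L I S) ∧
    (∀ (c : ℂ) (W : TubalScalar p →ₗ[ℂ] TubalScalar p), c ≠ 0 →
        (∀ x y : TubalScalar p, ∑ k, star (W x k) * W y k = ∑ k, star (x k) * y k) →
        (∀ x, L x = c • W x) →
        ∃ (S : ((m : Fin N) → Fin (I m)) → TubalScalar p)
          (U : (n : Fin N) → Fin (I n) → Fin (I n) → TubalScalar p),
          A = multiProd L I I S U ∧ (∀ n, tUnitary L (U n)) ∧ allOrth L I S ∧
            ordering I S) := by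
  classical
  -- Step 1: choose per-mode, per-frequency diagonalizing unitaries with sorted eigenvalues
  have hM : ∀ (n : Fin N) (k : Fin p),
      ∃ (V : Matrix (Fin (I n)) (Fin (I n)) ℂ) (d : Fin (I n) → ℝ),
        V * Vᴴ = 1 ∧ Vᴴ * V = 1 ∧ Antitone d ∧
          Vᴴ * ((Matrix.of fun a (c : Cidx I n) => L (A (insertAt n a c)) k) *
              (Matrix.of fun a (c : Cidx I n) => L (A (insertAt n a c)) k)ᴴ) * V
            = Matrix.diagonal (fun a => (d a : ℂ)) :=
    fun n k => exists_diagonalizer _ (Matrix.isHermitian_mul_conjTranspose_self _)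
  choose V d hV1 hV2 hd hdiag using hM
  -- rows/columns orthogonality, entrywise
  have horr : ∀ (n : Fin N) (k : Fin p) (a b : Fin (I n)),
      (∑ j, V n k a j * star (V n k b j)) = if a = b then 1 else 0 := by
    intro n k a b
    have h := congrFun (congrFun (hV1 n k) a) b
    rw [Matrix.mul_apply] at h
    simp only [Matrix.conjTranspose_apply] at h
    rwa [Matrix.one_apply] at h
  have horr' : ∀ (n : Fin N) (k : Fin p) (a b : Fin (I n)),
      (∑ j, star (V n k a j) * V n k b j) = if a = b then 1 else 0 := by
    intro n k a b
    have h := congr_arg star (horr n k a b)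
    rw [star_sum] at h
    simp only [star_mul', star_star] at h
    rw [h]
    split_ifs <;> simp
  have horc : ∀ (n : Fin N) (k : Fin p) (a b : Fin (I n)),
      (∑ j, star (V n k j a) * V n k j b) = if a = b then 1 else 0 := by
    intro n k a b
    have h := congrFun (congrFun (hV2 n k) a) b
    rw [Matrix.mul_apply] at h
    simp only [Matrix.conjTranspose_apply] at h
    rwa [Matrix.one_apply] at h
  -- the core and the factors
  set Sh : Fin p → ((m : Fin N) → Fin (I m)) → ℂ :=
    fun k jdx => ∑ idx : (m : Fin N) → Fin (I m),
      L (A idx) k * ∏ m, star (V m k (idx m) (jdx m)) with hShdef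
  set S : ((m : Fin N) → Fin (I m)) → TubalScalar p :=
    fun jdx => L.symm (fun k => Sh k jdx) with hSdef
  set U : (n : Fin N) → Fin (I n) → Fin (I n) → TubalScalar p :=
    fun n i j => L.symm (fun k => V n k i j) with hUdef
  have hLS : ∀ jdx, L (S jdx) = fun k => Sh k jdx := fun jdx => L.apply_symm_apply _
  have hLU : ∀ n i j, L (U n i j) = fun k => V n k i j := fun n i j => L.apply_symm_apply _
  -- reconstruction
  have hrec : A = multiProd L I I S U := by
    funext idx
    apply L.injective
    have hexp : L (multiProd L I I S U idx)
        = ∑ jdx : (m : Fin N) → Fin (I m),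
            (L (S jdx) * ∏ n, L (U n (idx n) (jdx n))) := by
      simp only [multiProd, map_sum, L.apply_symm_apply]
    rw [hexp]
    funext k
    rw [Finset.sum_apply]
    simp only [Pi.mul_apply, Finset.prod_apply, hLS, hLU]
    calc L (A idx) k
        = ∑ idx' : (m : Fin N) → Fin (I m), L (A idx') k *
            ∏ m, (if idx m = idx' m then (1:ℂ) else 0) := by
          rw [Finset.sum_eq_single idx]
          · simp
          · intro idx' _ hne
            obtain ⟨m, hm⟩ : ∃ m, idx m ≠ idx' m := by
              by_contra hc
              push_neg at hc
              exact hne (funext fun m => (hc m).symm)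
            have hz : (∏ m, if idx m = idx' m then (1:ℂ) else 0) = 0 :=
              Finset.prod_eq_zero (Finset.mem_univ m) (if_neg hm)
            rw [hz, mul_zero]
          · intro h; exact absurd (Finset.mem_univ idx) h
      _ = ∑ idx' : (m : Fin N) → Fin (I m), L (A idx') k *
            ∏ m, ∑ j, star (V m k (idx' m) j) * V m k (idx m) j := by
          refine Finset.sum_congr rfl fun idx' _ => ?_
          congr 1
          refine Finset.prod_congr rfl fun m _ => ?_
          rw [horr']
          by_cases h : idx m = idx' m
          · simp [h]
          · rw [if_neg h, if_neg (fun hc => h (Eq.symm hc))]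
      _ = ∑ idx' : (m : Fin N) → Fin (I m), L (A idx') k *
            ∑ jdx : (m : Fin N) → Fin (I m),
              ∏ m, (star (V m k (idx' m) (jdx m)) * V m k (idx m) (jdx m)) := by
          refine Finset.sum_congr rfl fun idx' _ => ?_
          rw [Fintype.prod_sum]
      _ = ∑ jdx, Sh k jdx * ∏ n, V n k (idx n) (jdx n) := by
          simp only [hShdef, Finset.mul_sum, Finset.sum_mul, Finset.prod_mul_distrib]
          rw [Finset.sum_comm]
          exact Finset.sum_congr rfl fun y _ => Finset.sum_congr rfl fun x _ =>
            (mul_assoc _ _ _).symm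
  -- unitarity
  have huni : ∀ n, tUnitary L (U n) := by
    intro n
    constructor
    · funext i j
      apply L.injective
      have h1 : L (tMul L (U n) (tHerm L (U n)) i j)
          = ∑ l, ((fun k => V n k i l) * star (fun k => V n k j l)) := by
        simp only [tMul, tmul, tHerm, map_sum, L.apply_symm_apply, hLU]
      rw [h1]
      funext k
      rw [Finset.sum_apply]
      simp only [Pi.mul_apply, Pi.star_apply]
      rw [horr]
      by_cases h : i = j
      · subst h; simp [tId]
      · simp [tId, h]
    · funext i j
      apply L.injective
      have h1 : L (tMul L (tHerm L (U n)) (U n) i j)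
          = ∑ l, (star (fun k => V n k l i) * (fun k => V n k l j)) := by
        simp only [tMul, tmul, tHerm, map_sum, L.apply_symm_apply, hLU]
      rw [h1]
      funext k
      rw [Finset.sum_apply]
      simp only [Pi.mul_apply, Pi.star_apply]
      rw [horc]
      by_cases h : i = j
      · subst h; simp [tId]
      · simp [tId, h]
  -- the unfolded core equals Vᴴ M Q
  have hSm : ∀ (n : Fin N) (k : Fin p),
      (Matrix.of fun a (c : Cidx I n) => Sh k (insertAt n a c))
        = (V n k)ᴴ * (Matrix.of fun a (c : Cidx I n) => L (A (insertAt n a c)) k) *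
            (Matrix.of fun (γ c' : Cidx I n) =>
              ∏ m : {m : Fin N // m ≠ n}, star (V m.1 k (γ m) (c' m))) := by
    intro n k
    ext a c
    rw [Matrix.mul_apply]
    simp only [Matrix.mul_apply, Matrix.conjTranspose_apply, Matrix.of_apply, hShdef]
    rw [← Equiv.sum_comp (splitEquivX n).symm
      (fun idx => L (A idx) k * ∏ m, star (V m k (idx m) (insertAt n a c m)))]
    rw [Fintype.sum_prod_type]
    rw [Finset.sum_comm]
    refine Finset.sum_congr rfl fun γ _ => ?_
    rw [Finset.sum_mul]
    refine Finset.sum_congr rfl fun α _ => ?_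
    simp only [splitEquivX_symm_apply]
    rw [prod_insertAt n a c
      (fun m j => star (V m k (insertAt n α γ m) j))]
    rw [insertAt_self]
    have hrest : (∏ m : {m : Fin N // m ≠ n}, star (V m.1 k (insertAt n α γ m.1) (c m)))
        = ∏ m : {m : Fin N // m ≠ n}, star (V m.1 k (γ m) (c m)) := by
      refine Finset.prod_congr rfl fun m _ => ?_
      rw [insertAt_ne m.2]
    rw [hrest]
    ring
  -- the Q matrix is unitary
  have hQ : ∀ (n : Fin N) (k : Fin p),
      (Matrix.of fun (γ c : Cidx I n) =>
        ∏ m : {m : Fin N // m ≠ n}, star (V m.1 k (γ m) (c m))) *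
      (Matrix.of fun (γ c : Cidx I n) =>
        ∏ m : {m : Fin N // m ≠ n}, star (V m.1 k (γ m) (c m)))ᴴ = 1 := by
    intro n k
    ext γ γ'
    rw [Matrix.mul_apply]
    simp only [Matrix.conjTranspose_apply, Matrix.of_apply, star_prod, star_star]
    have hstep : ∀ c : Cidx I n,
        ((∏ m : {m : Fin N // m ≠ n}, star (V m.1 k (γ m) (c m))) *
          ∏ m : {m : Fin N // m ≠ n}, V m.1 k (γ' m) (c m))
        = ∏ m : {m : Fin N // m ≠ n},
            (star (V m.1 k (γ m) (c m)) * V m.1 k (γ' m) (c m)) := by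
      intro c
      rw [Finset.prod_mul_distrib]
    rw [Finset.sum_congr rfl fun c _ => hstep c]
    rw [← Fintype.prod_sum (fun m (j : Fin (I m.1)) =>
      star (V m.1 k (γ m) j) * V m.1 k (γ' m) j)]
    by_cases h : γ = γ'
    · subst h
      rw [Matrix.one_apply_eq]
      rw [Finset.prod_congr rfl fun m _ => horr' m.1 k (γ m) (γ m)]
      simp
    · obtain ⟨m, hm⟩ : ∃ m : {m : Fin N // m ≠ n}, γ m ≠ γ' m := by
        by_contra hc
        push_neg at hc
        exact h (funext hc)
      rw [Matrix.one_apply_ne h]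
      refine Finset.prod_eq_zero (Finset.mem_univ m) ?_
      rw [horr' m.1 k (γ m) (γ' m), if_neg hm]
  -- the key Gram computation
  have hT : ∀ (n : Fin N) (k : Fin p) (a b : Fin (I n)),
      (∑ c : Cidx I n, star (Sh k (insertAt n a c)) * Sh k (insertAt n b c))
        = Matrix.diagonal (fun a => ((d n k a : ℝ) : ℂ)) b a := by
    intro n k a b
    obtain ⟨M, hMdef⟩ : ∃ M' : Matrix (Fin (I n)) (Cidx I n) ℂ,
        (Matrix.of fun a (c : Cidx I n) => L (A (insertAt n a c)) k) = M' := ⟨_, rfl⟩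
    obtain ⟨Q, hQdef⟩ : ∃ Q' : Matrix (Cidx I n) (Cidx I n) ℂ,
        (Matrix.of fun (γ c : Cidx I n) =>
          ∏ m : {m : Fin N // m ≠ n}, star (V m.1 k (γ m) (c m))) = Q' := ⟨_, rfl⟩
    have hSmEq : (Matrix.of fun a (c : Cidx I n) => Sh k (insertAt n a c))
        = (V n k)ᴴ * M * Q := by rw [← hMdef, ← hQdef]; exact hSm n k
    have hQ1 : Q * Qᴴ = 1 := by rw [← hQdef]; exact hQ n k
    have hdg : (V n k)ᴴ * (M * Mᴴ) * V n k
        = Matrix.diagonal (fun a => ((d n k a : ℝ) : ℂ)) := by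
      rw [← hMdef]; exact hdiag n k
    have step1 : (∑ c : Cidx I n, star (Sh k (insertAt n a c)) * Sh k (insertAt n b c))
        = ((Matrix.of fun a (c : Cidx I n) => Sh k (insertAt n a c)) *
            (Matrix.of fun a (c : Cidx I n) => Sh k (insertAt n a c))ᴴ) b a := by
      rw [Matrix.mul_apply]
      simp only [Matrix.conjTranspose_apply, Matrix.of_apply]
      exact Finset.sum_congr rfl fun c _ => (mul_comm _ _)
    rw [step1, hSmEq]
    have assoc : (V n k)ᴴ * M * Q * ((V n k)ᴴ * M * Q)ᴴ
        = (V n k)ᴴ * (M * Mᴴ) * V n k := by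
      rw [Matrix.conjTranspose_mul, Matrix.conjTranspose_mul,
        Matrix.conjTranspose_conjTranspose]
      calc (V n k)ᴴ * M * Q * (Qᴴ * (Mᴴ * V n k))
          = (V n k)ᴴ * M * (Q * Qᴴ) * (Mᴴ * V n k) := by
            simp only [Matrix.mul_assoc]
        _ = (V n k)ᴴ * (M * Mᴴ) * V n k := by
            rw [hQ1, Matrix.mul_one]
            simp only [Matrix.mul_assoc]
    rw [assoc, hdg]
  -- all-orthogonality
  have horthS : allOrth L I S := by
    intro n a b hab
    apply L.injective
    rw [map_sum, map_zero]
    funext k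
    rw [Finset.sum_apply]
    simp only [tmul, tstar, L.apply_symm_apply, hLS, Pi.mul_apply, Pi.star_apply,
      Pi.zero_apply]
    rw [Finset.sum_congr rfl (fun c _ => rfl),
      show (∑ c : Cidx I n, star (Sh k (insertAt n a c)) * Sh k (insertAt n b c)) = 0 from by
        rw [hT n k a b, Matrix.diagonal_apply_ne _ (Ne.symm hab)]]
  -- diagonal values
  have hTd : ∀ (n : Fin N) (k : Fin p) (a : Fin (I n)),
      (∑ c : Cidx I n, (‖Sh k (insertAt n a c)‖)^2) = d n k a := by
    intro n k a
    have h := hT n k a a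
    rw [Matrix.diagonal_apply_eq] at h
    have h2 : (∑ c : Cidx I n, star (Sh k (insertAt n a c)) * Sh k (insertAt n a c))
        = (((∑ c : Cidx I n, (‖Sh k (insertAt n a c)‖)^2 : ℝ)) : ℂ) := by
      push_cast
      exact Finset.sum_congr rfl fun c _ => star_mul_self_eq_abs _
    rw [h2] at h
    exact_mod_cast h
  -- ordered slice sums (in the transform domain)
  have hord' : ∀ (n : Fin N) (a b : Fin (I n)), a ≤ b →
      (∑ c : Cidx I n, ∑ k, (‖Sh k (insertAt n b c)‖)^2)
        ≤ ∑ c : Cidx I n, ∑ k, (‖Sh k (insertAt n a c)‖)^2 := by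
    intro n a b hab
    rw [Finset.sum_comm, Finset.sum_comm
      (f := fun c (k : Fin p) => (‖Sh k (insertAt n a c)‖)^2)]
    calc (∑ k, ∑ c : Cidx I n, (‖Sh k (insertAt n b c)‖)^2)
        = ∑ k, d n k b := Finset.sum_congr rfl fun k _ => hTd n k b
      _ ≤ ∑ k, d n k a := Finset.sum_le_sum fun k _ => hd n k hab
      _ = ∑ k, ∑ c : Cidx I n, (‖Sh k (insertAt n a c)‖)^2 :=
          (Finset.sum_congr rfl fun k _ => hTd n k a).symm
  refine ⟨⟨S, U, hrec, huni, horthS⟩, ?_⟩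
  intro c0 W hc0 hW hL
  refine ⟨S, U, hrec, huni, horthS, ?_⟩
  -- translate slice norms via the scaled-unitary structure of L
  have hq0 : Complex.normSq c0 ≠ 0 := by
    simpa using hc0
  have hnorm : ∀ x : TubalScalar p,
      (∑ k, (‖L x k‖)^2)
        = Complex.normSq c0 * ∑ k, (‖x k‖)^2 := by
    intro x
    have hWx : (∑ k, (‖W x k‖)^2) = ∑ k, (‖x k‖)^2 := by
      have h2 := hW x x
      have h3 : (((∑ k, (‖W x k‖)^2 : ℝ)) : ℂ)
          = (((∑ k, (‖x k‖)^2 : ℝ)) : ℂ) := by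
        push_cast
        calc (∑ k, ((‖W x k‖ : ℝ) : ℂ)^2)
            = ∑ k, star (W x k) * W x k :=
              Finset.sum_congr rfl fun k _ => (star_mul_self_eq_abs _).symm
          _ = ∑ k, star (x k) * x k := hW x x
          _ = ∑ k, ((‖x k‖ : ℝ) : ℂ)^2 :=
              Finset.sum_congr rfl fun k _ => star_mul_self_eq_abs _
      exact_mod_cast h3
    rw [← hWx, Finset.mul_sum]
    refine Finset.sum_congr rfl fun k _ => ?_
    have : L x k = c0 * W x k := by
      rw [hL x]; rfl
    rw [this, norm_mul, mul_pow, ← Complex.sq_norm]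
  have hkey : ∀ (n : Fin N) (a : Fin (I n)),
      (∑ c : Cidx I n, ∑ k, (‖S (insertAt n a c) k‖)^2)
        = (Complex.normSq c0)⁻¹ *
            ∑ c : Cidx I n, ∑ k, (‖Sh k (insertAt n a c)‖)^2 := by
    intro n a
    rw [Finset.mul_sum]
    refine Finset.sum_congr rfl fun c _ => ?_
    have h := hnorm (S (insertAt n a c))
    simp only [hLS] at h
    rw [h, inv_mul_cancel_left₀ hq0]
  intro n a b hab
  show Real.sqrt _ ≤ Real.sqrt _
  apply Real.sqrt_le_sqrt
  rw [show (∑ c : Cidx I n, ∑ k, (‖S (insertAt n b c) k‖)^2)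
      = (Complex.normSq c0)⁻¹ *
          ∑ c : Cidx I n, ∑ k, (‖Sh k (insertAt n b c)‖)^2 from hkey n b,
    show (∑ c : Cidx I n, ∑ k, (‖S (insertAt n a c) k‖)^2)
      = (Complex.normSq c0)⁻¹ *
          ∑ c : Cidx I n, ∑ k, (‖Sh k (insertAt n a c)‖)^2 from hkey n a]
  exact mul_le_mul_of_nonneg_left (hord' n a b hab) (inv_nonneg.mpr (Complex.normSq_nonneg c0))
end

section
/- Norm invariance of Hot-SVD: assume L = c·W where c ∈ ℂ is nonzero and W : ℂ^p → ℂ^p is unitary for the standard Hermitian inner product. If A = S *₁ U₁ *₂ U₂ ⋯ *_N U_N where A, S ∈ ℂ_p^{I₁×⋯×I_N} are tubal tensors of order N and each U_n ∈ ℂ_p^{I_n×I_n} is a unitary tubal matrix, then ‖A‖ = ‖S‖ in the Frobenius norm. -/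
/-!
STATEMENT 13: Norm invariance of Hot-SVD: if L = c·W with c ≠ 0 and W unitary for the
standard Hermitian inner product, and A = S *₁ U₁ ⋯ *_N U_N with each U_n unitary,
then ‖A‖ = ‖S‖ in the Frobenius norm.
-/

open scoped BigOperators

variable {p : ℕ}

/-- The Frobenius norm: the square root of the sum, over all positions and all `p`
components, of the squared absolute values of the components. -/
noncomputable def tnorm {ι : Type*} [Fintype ι] (X : ι → TubalScalar p) : ℝ :=
  Real.sqrt (∑ i : ι, ∑ k : Fin p, ‖X i k‖ ^ 2)

/-- Auxiliary: sum over a pi type of a product equals product of sums. -/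
lemma piSum {N : ℕ} (I : Fin N → ℕ) (f : (n : Fin N) → Fin (I n) → ℂ) :
    ∑ idx : (m : Fin N) → Fin (I m), ∏ n, f n (idx n) = ∏ n, ∑ i, f n i := by
  rw [Finset.prod_univ_sum, Fintype.piFinset_univ]

/-- Auxiliary: multilinear multiplication by slicewise-unitary matrices preserves
the sum of `conj z * z`. -/
lemma keyC {N : ℕ} (I : Fin N → ℕ) (s : ((m : Fin N) → Fin (I m)) → ℂ)
    (u : (n : Fin N) → Fin (I n) → Fin (I n) → ℂ)
    (hu : ∀ n j j', ∑ i, starRingEnd ℂ (u n i j) * u n i j' = if j = j' then 1 else 0) :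
    ∑ idx : (m : Fin N) → Fin (I m),
        starRingEnd ℂ (∑ jdx, s jdx * ∏ n, u n (idx n) (jdx n)) *
          (∑ jdx, s jdx * ∏ n, u n (idx n) (jdx n))
      = ∑ jdx : (m : Fin N) → Fin (I m), starRingEnd ℂ (s jdx) * s jdx := by
  have expand : ∀ idx : (m : Fin N) → Fin (I m),
      starRingEnd ℂ (∑ jdx, s jdx * ∏ n, u n (idx n) (jdx n)) *
        (∑ jdx, s jdx * ∏ n, u n (idx n) (jdx n))
      = ∑ j : (m : Fin N) → Fin (I m), ∑ j' : (m : Fin N) → Fin (I m),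
          (starRingEnd ℂ (s j) * s j') *
            ∏ n, starRingEnd ℂ (u n (idx n) (j n)) * u n (idx n) (j' n) := by
    intro idx
    rw [map_sum, Finset.sum_mul]
    refine Finset.sum_congr rfl fun j _ => ?_
    rw [Finset.mul_sum]
    refine Finset.sum_congr rfl fun j' _ => ?_
    rw [map_mul, map_prod, Finset.prod_mul_distrib]
    ring
  rw [Finset.sum_congr rfl fun idx _ => expand idx, Finset.sum_comm]
  refine Finset.sum_congr rfl fun j _ => ?_
  rw [Finset.sum_comm]
  have inner : ∀ j' : (m : Fin N) → Fin (I m),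
      ∑ idx : (m : Fin N) → Fin (I m),
        (starRingEnd ℂ (s j) * s j') *
          ∏ n, starRingEnd ℂ (u n (idx n) (j n)) * u n (idx n) (j' n)
      = (starRingEnd ℂ (s j) * s j') * if j = j' then 1 else 0 := by
    intro j'
    rw [← Finset.mul_sum]
    congr 1
    have : ∑ idx : (m : Fin N) → Fin (I m),
        ∏ n, starRingEnd ℂ (u n (idx n) (j n)) * u n (idx n) (j' n)
        = ∏ n, ∑ i, starRingEnd ℂ (u n i (j n)) * u n i (j' n) :=
      piSum I (fun n i => starRingEnd ℂ (u n i (j n)) * u n i (j' n))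
    rw [this]
    rw [Finset.prod_congr rfl fun n _ => hu n (j n) (j' n)]
    rw [Finset.prod_boole]
    simp [funext_iff]
  rw [Finset.sum_congr rfl fun j' _ => inner j']
  simp

/-- `normSq` version of `keyC`. -/
lemma keyNormSq {N : ℕ} (I : Fin N → ℕ) (s : ((m : Fin N) → Fin (I m)) → ℂ)
    (u : (n : Fin N) → Fin (I n) → Fin (I n) → ℂ)
    (hu : ∀ n j j', ∑ i, starRingEnd ℂ (u n i j) * u n i j' = if j = j' then 1 else 0) :
    ∑ idx : (m : Fin N) → Fin (I m),
        Complex.normSq (∑ jdx, s jdx * ∏ n, u n (idx n) (jdx n))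
      = ∑ jdx : (m : Fin N) → Fin (I m), Complex.normSq (s jdx) := by
  have h := keyC I s u hu
  have hz : ∀ z : ℂ, starRingEnd ℂ z * z = (Complex.normSq z : ℂ) := fun z => by
    rw [Complex.normSq_eq_conj_mul_self]
  rw [Finset.sum_congr rfl fun idx _ => hz _, Finset.sum_congr rfl fun jdx _ => hz _] at h
  exact_mod_cast h

theorem tnorm_multiProd_unitary {N : ℕ} (L : TubalScalar p ≃ₗ[ℂ] TubalScalar p)
    (c : ℂ) (W : TubalScalar p →ₗ[ℂ] TubalScalar p) (hc : c ≠ 0)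
    (hW : ∀ x y : TubalScalar p, ∑ k, star (W x k) * W y k = ∑ k, star (x k) * y k)
    (hLW : ∀ x, L x = c • W x)
    (I : Fin N → ℕ)
    (A S : ((m : Fin N) → Fin (I m)) → TubalScalar p)
    (U : (n : Fin N) → Fin (I n) → Fin (I n) → TubalScalar p)
    (hU : ∀ n, tUnitary L (U n))
    (hA : A = multiProd L I I S U) :
    tnorm A = tnorm S := by
  classical
  -- slice formula for A
  have haform : ∀ (k : Fin p) (idx : (m : Fin N) → Fin (I m)),
      L (A idx) k = ∑ jdx : (m : Fin N) → Fin (I m),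
        L (S jdx) k * ∏ n, L (U n (idx n) (jdx n)) k := by
    intro k idx
    rw [hA]
    simp only [multiProd, map_sum, LinearEquiv.apply_symm_apply]
    rw [Finset.sum_apply]
    exact Finset.sum_congr rfl fun jdx _ => by
      rw [Pi.mul_apply, Finset.prod_apply]
  -- slicewise unitarity
  have huslice : ∀ (k : Fin p) (n : Fin N) (j j' : Fin (I n)),
      ∑ i, starRingEnd ℂ (L (U n i j) k) * L (U n i j') k
        = if j = j' then 1 else 0 := by
    intro k n j j'
    have h := congrFun (congrFun (hU n).2 j) j'
    have h2 := congrFun (congrArg L h) k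
    simp only [tMul, tHerm, tmul, tId, map_sum, LinearEquiv.apply_symm_apply,
      apply_ite L, map_zero, Finset.sum_apply, Pi.mul_apply, Pi.star_apply,
      Pi.one_apply, Pi.zero_apply] at h2
    simpa [Complex.star_def, apply_ite (fun f : TubalScalar p => f k)] using h2
  -- W preserves componentwise normSq sums
  have hWnorm : ∀ x : TubalScalar p,
      ∑ k, Complex.normSq (W x k) = ∑ k, Complex.normSq (x k) := by
    intro x
    have h := hW x x
    have hz : ∀ z : ℂ, star z * z = (Complex.normSq z : ℂ) := fun z => by
      rw [Complex.star_def, Complex.normSq_eq_conj_mul_self]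
    rw [Finset.sum_congr rfl fun k _ => hz _, Finset.sum_congr rfl fun k _ => hz _] at h
    exact_mod_cast h
  -- L scales componentwise normSq sums by normSq c
  have hLnorm : ∀ x : TubalScalar p,
      ∑ k, Complex.normSq (L x k) = Complex.normSq c * ∑ k, Complex.normSq (x k) := by
    intro x
    rw [← hWnorm x, Finset.mul_sum]
    refine Finset.sum_congr rfl fun k _ => ?_
    rw [hLW x, Pi.smul_apply, smul_eq_mul, Complex.normSq_mul]
  -- per-slice norm equality in the transformed domain
  have hslice : ∀ k : Fin p,
      ∑ idx : (m : Fin N) → Fin (I m), Complex.normSq (L (A idx) k)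
        = ∑ jdx : (m : Fin N) → Fin (I m), Complex.normSq (L (S jdx) k) := by
    intro k
    have h := keyNormSq I (fun jdx => L (S jdx) k) (fun n i j => L (U n i j) k)
      (huslice k)
    rw [Finset.sum_congr rfl fun idx _ => congrArg Complex.normSq (haform k idx)]
    exact h
  -- total sums are equal
  have hcne : Complex.normSq c ≠ 0 := fun h => hc (Complex.normSq_eq_zero.mp h)
  have htot : ∑ idx : (m : Fin N) → Fin (I m), ∑ k, Complex.normSq (A idx k)
      = ∑ jdx : (m : Fin N) → Fin (I m), ∑ k, Complex.normSq (S jdx k) := by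
    refine mul_left_cancel₀ hcne ?_
    calc Complex.normSq c * ∑ idx : (m : Fin N) → Fin (I m), ∑ k, Complex.normSq (A idx k)
        = ∑ idx : (m : Fin N) → Fin (I m), ∑ k, Complex.normSq (L (A idx) k) := by
          rw [Finset.mul_sum]
          exact Finset.sum_congr rfl fun idx _ => (hLnorm (A idx)).symm
      _ = ∑ k, ∑ idx : (m : Fin N) → Fin (I m), Complex.normSq (L (A idx) k) :=
          Finset.sum_comm
      _ = ∑ k, ∑ jdx : (m : Fin N) → Fin (I m), Complex.normSq (L (S jdx) k) :=
          Finset.sum_congr rfl fun k _ => hslice k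
      _ = ∑ jdx : (m : Fin N) → Fin (I m), ∑ k, Complex.normSq (L (S jdx) k) :=
          Finset.sum_comm
      _ = Complex.normSq c * ∑ jdx : (m : Fin N) → Fin (I m), ∑ k, Complex.normSq (S jdx k) := by
          rw [Finset.mul_sum]
          exact Finset.sum_congr rfl fun jdx _ => hLnorm (S jdx)
  unfold tnorm
  congr 1
  simpa [Complex.sq_norm] using htot
end

section
/- Orthogonality with respect to the tensor-tensor product implies Frobenius orthogonality: assume L = c·W where c ∈ ℂ is nonzero and W : ℂ^p → ℂ^p is unitary for the standard Hermitian inner product. Let A₁,…,A_N ∈ ℂ_p^{I₁×I₂} be tubal matrices with A_m^H * A_n = O (the zero tubal matrix) for all 1 ≤ m ≠ n ≤ N. Then ⟨A_m, A_n⟩ = 0 for all m ≠ n, and consequently ‖A₁ + A₂ + ⋯ + A_N‖² = ‖A₁‖² + ‖A₂‖² + ⋯ + ‖A_N‖². -/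
/-!
STATEMENT 14: Orthogonality with respect to the tensor-tensor product implies
Frobenius orthogonality; consequently the Pythagorean identity
‖A₁ + ⋯ + A_N‖² = ‖A₁‖² + ⋯ + ‖A_N‖² holds.
-/

open scoped BigOperators

variable {p : ℕ}

/-- The Frobenius inner product of two tubal matrices of the same size:
`⟨A,B⟩ := Σ (over all positions and all p components) conj(A-component)·(B-component)`. -/
noncomputable def finnerM {I J : Type*} [Fintype I] [Fintype J]
    (A B : I → J → TubalScalar p) : ℂ :=
  ∑ i : I, ∑ j : J, ∑ k : Fin p, star (A i j k) * B i j k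

/-- The Frobenius norm of a tubal matrix. -/
noncomputable def tnormM {I J : Type*} [Fintype I] [Fintype J]
    (A : I → J → TubalScalar p) : ℝ :=
  Real.sqrt (∑ i : I, ∑ j : J, ∑ k : Fin p, ‖A i j k‖ ^ 2)


lemma finnerM_self_eq {p : ℕ} {I J : Type*} [Fintype I] [Fintype J]
    (A : I → J → TubalScalar p) :
    finnerM A A = ((tnormM A ^ 2 : ℝ) : ℂ) := by
  have hnn : 0 ≤ ∑ i : I, ∑ j : J, ∑ k : Fin p, ‖A i j k‖ ^ 2 := by positivity
  rw [tnormM, Real.sq_sqrt hnn, finnerM]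
  push_cast
  refine Finset.sum_congr rfl fun i _ => Finset.sum_congr rfl fun j _ =>
    Finset.sum_congr rfl fun k _ => ?_
  rw [Complex.star_def, mul_comm, Complex.mul_conj]
  norm_cast
  exact (Complex.sq_norm _).symm

lemma finnerM_sum_sum {p : ℕ} {I J : Type*} [Fintype I] [Fintype J] {N : ℕ}
    (A : Fin N → I → J → TubalScalar p) :
    finnerM (∑ n, A n) (∑ n, A n) = ∑ m, ∑ n, finnerM (A m) (A n) := by
  have hleft : ∀ C : I → J → TubalScalar p,
      finnerM (∑ n, A n) C = ∑ m, finnerM (A m) C := by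
    intro C
    exact map_sum (AddMonoidHom.mk' (fun X => finnerM X C)
      (by intro a b; simp [finnerM, add_mul, Finset.sum_add_distrib])) _ _
  have hright : ∀ m, finnerM (A m) (∑ n, A n) = ∑ n, finnerM (A m) (A n) := by
    intro m
    exact map_sum (AddMonoidHom.mk' (fun X => finnerM (A m) X)
      (by intro a b; simp [finnerM, mul_add, Finset.sum_add_distrib])) _ _
  rw [hleft]
  exact Finset.sum_congr rfl fun m _ => hright m

theorem tOrth_implies_frobenius_orth {I₁ I₂ : Type*} [Fintype I₁] [Fintype I₂]
    (L : TubalScalar p ≃ₗ[ℂ] TubalScalar p)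
    (c : ℂ) (W : TubalScalar p →ₗ[ℂ] TubalScalar p) (hc : c ≠ 0)
    (hW : ∀ x y : TubalScalar p, ∑ k, star (W x k) * W y k = ∑ k, star (x k) * y k)
    (hLW : ∀ x, L x = c • W x)
    (N : ℕ) (A : Fin N → I₁ → I₂ → TubalScalar p)
    (hAB : ∀ m n : Fin N, m ≠ n → tMul L (tHerm L (A m)) (A n) = 0) :
    (∀ m n : Fin N, m ≠ n → finnerM (A m) (A n) = 0) ∧
    tnormM (∑ n : Fin N, A n) ^ 2 = ∑ n : Fin N, tnormM (A n) ^ 2 := by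
  have hcc : (starRingEnd ℂ) c * c ≠ 0 := mul_ne_zero (by simpa using hc) hc
  have key : ∀ m n : Fin N, m ≠ n → finnerM (A m) (A n) = 0 := by
    intro m n hmn
    have h := hAB m n hmn
    have h2 : ∀ j : I₂, ∑ i : I₁, (star (L (A m i j)) * L (A n i j)) = 0 := by
      intro j
      have h0 : tMul L (tHerm L (A m)) (A n) j j = 0 := by rw [h]; rfl
      have hL := congrArg L h0
      simpa [tMul, tHerm, tmul, map_sum] using hL
    have h3 : ∀ i j, (∑ k, star (L (A m i j) k) * L (A n i j) k)
        = ((starRingEnd ℂ) c * c) * ∑ k, star (A m i j k) * (A n i j k) := by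
      intro i j
      have : ∑ k, star (L (A m i j) k) * L (A n i j) k
          = ((starRingEnd ℂ) c * c) * ∑ k, star (W (A m i j) k) * W (A n i j) k := by
        simp only [hLW, Pi.smul_apply, smul_eq_mul, Complex.star_def, map_mul,
          Finset.mul_sum]
        refine Finset.sum_congr rfl fun k _ => ?_
        ring
      rw [this, hW]
    have h4 : ((starRingEnd ℂ) c * c) * finnerM (A m) (A n) = 0 := by
      rw [finnerM, Finset.mul_sum]
      calc ∑ i : I₁, ((starRingEnd ℂ) c * c) * (∑ j : I₂, ∑ k, star (A m i j k) * A n i j k)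
          = ∑ j : I₂, ∑ i : I₁, ∑ k, star (L (A m i j) k) * L (A n i j) k := by
            simp only [Finset.mul_sum, h3]
            exact Finset.sum_comm
        _ = 0 := by
            refine Finset.sum_eq_zero fun j _ => ?_
            have := h2 j
            calc ∑ i : I₁, ∑ k, star (L (A m i j) k) * L (A n i j) k
                = ∑ k, (∑ i : I₁, star (L (A m i j)) * L (A n i j)) k := by
                  rw [Finset.sum_comm]; simp [Finset.sum_apply]
              _ = 0 := by rw [this]; simp
    exact (mul_eq_zero.mp h4).resolve_left hcc
  refine ⟨key, ?_⟩
  have hmain : ((tnormM (∑ n : Fin N, A n) ^ 2 : ℝ) : ℂ)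
      = ((∑ n : Fin N, tnormM (A n) ^ 2 : ℝ) : ℂ) := by
    rw [← finnerM_self_eq, finnerM_sum_sum]
    push_cast
    refine Finset.sum_congr rfl fun m _ => ?_
    rw [Finset.sum_eq_single m (fun n _ hnm => key m n (Ne.symm hnm))
      (fun hm => absurd (Finset.mem_univ m) hm), finnerM_self_eq]
    push_cast
    ring
  exact_mod_cast hmain
end

section
/- Pythagorean identity for projection along a mode: assume L = c·W where c ∈ ℂ is nonzero and W : ℂ^p → ℂ^p is unitary for the standard Hermitian inner product. Let A ∈ ℂ_p^{I₁×⋯×I_N} be a tubal tensor of order N and Ŭ ∈ ℂ_p^{I_n×R} (I_n ≥ R) a partially unitary tubal matrix. Then ‖A *_n (Ŭ*Ŭ^H)‖² + ‖A *_n (𝓘 − Ŭ*Ŭ^H)‖² = ‖A‖²; in particular ‖A *_n (Ŭ*Ŭ^H)‖ ≤ ‖A‖. -/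
/-!
STATEMENT 15: Pythagorean identity for projection along a mode:
‖A *_n (Ŭ*Ŭ^H)‖² + ‖A *_n (𝓘 − Ŭ*Ŭ^H)‖² = ‖A‖², in particular
‖A *_n (Ŭ*Ŭ^H)‖ ≤ ‖A‖, for a partially unitary Ŭ (assuming L = c·W, W unitary).
-/

open scoped BigOperators

variable {p : ℕ}

lemma csum_abs_sq {κ : Type*} [Fintype κ] (a : κ → ℂ) :
    ((∑ j, ‖a j‖ ^ 2 : ℝ) : ℂ) = ∑ j, (starRingEnd ℂ) (a j) * a j := by
  push_cast
  refine Finset.sum_congr rfl fun j _ => ?_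
  rw [← Complex.normSq_eq_conj_mul_self, ← Complex.sq_norm]
  push_cast; ring

noncomputable def Qop {κ : Type*} [Fintype κ] (P : κ → κ → ℂ) (a : κ → ℂ) (j : κ) : ℂ :=
  ∑ i, a i * P j i

lemma Qop_adj {κ : Type*} [Fintype κ] (P : κ → κ → ℂ)
    (hPH : ∀ j i, (starRingEnd ℂ) (P j i) = P i j) (a b : κ → ℂ) :
    ∑ j, (starRingEnd ℂ) (a j) * Qop P b j = ∑ i, (starRingEnd ℂ) (Qop P a i) * b i := by
  simp only [Qop, Finset.mul_sum, map_sum, Finset.sum_mul]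
  rw [Finset.sum_comm]
  refine Finset.sum_congr rfl fun i _ => Finset.sum_congr rfl fun j _ => ?_
  rw [map_mul, hPH]
  ring

lemma Qop_idem {κ : Type*} [Fintype κ] (P : κ → κ → ℂ)
    (hP2 : ∀ j l, ∑ i, P j i * P i l = P j l) (a : κ → ℂ) :
    Qop P (Qop P a) = Qop P a := by
  funext j
  calc Qop P (Qop P a) j = ∑ l, a l * ∑ i, P j i * P i l := by
        simp only [Qop, Finset.sum_mul, Finset.mul_sum]
        rw [Finset.sum_comm]
        exact Finset.sum_congr rfl fun l _ => Finset.sum_congr rfl fun i _ => by ring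
    _ = Qop P a j := by simp_rw [hP2]; rfl

lemma proj_pyth {κ : Type*} [Fintype κ] [DecidableEq κ] (P : κ → κ → ℂ)
    (hPH : ∀ j i, (starRingEnd ℂ) (P j i) = P i j)
    (hP2 : ∀ j l, ∑ i, P j i * P i l = P j l) (v : κ → ℂ) :
    ∑ j, ‖∑ i, v i * P j i‖ ^ 2
      + ∑ j, ‖∑ i, v i * ((if j = i then (1:ℂ) else 0) - P j i)‖ ^ 2
      = ∑ j, ‖v j‖ ^ 2 := by
  have hqdef : ∀ j, ∑ i, v i * P j i = Qop P v j := fun j => rfl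
  have hsimp2 : ∀ j, ∑ i, v i * ((if j = i then (1:ℂ) else 0) - P j i) = v j - Qop P v j := by
    intro j
    rw [← hqdef]
    simp only [mul_sub, Finset.sum_sub_distrib]
    congr 1
    simp [mul_ite, mul_one, mul_zero, Finset.sum_ite_eq']
  have e1 : ∑ j, (starRingEnd ℂ) (Qop P v j) * Qop P v j
      = ∑ j, (starRingEnd ℂ) (Qop P v j) * v j := by
    have h := Qop_adj P hPH (Qop P v) v
    rw [Qop_idem P hP2 v] at h
    calc ∑ j, (starRingEnd ℂ) (Qop P v j) * Qop P v j
        = ∑ i, (starRingEnd ℂ) (Qop P v i) * v i := h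
      _ = _ := rfl
  have e2 : ∑ j, (starRingEnd ℂ) (v j) * Qop P v j
      = ∑ j, (starRingEnd ℂ) (Qop P v j) * Qop P v j := by
    have h := Qop_adj P hPH v (Qop P v)
    rw [Qop_idem P hP2 v] at h
    exact h
  have main : (∑ j, (starRingEnd ℂ) (Qop P v j) * Qop P v j)
      + ∑ j, (starRingEnd ℂ) (v j - Qop P v j) * (v j - Qop P v j)
      = ∑ j, (starRingEnd ℂ) (v j) * v j := by
    have expand : ∑ j, (starRingEnd ℂ) (v j - Qop P v j) * (v j - Qop P v j)
        = ∑ j, (starRingEnd ℂ) (v j) * v j - ∑ j, (starRingEnd ℂ) (v j) * Qop P v j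
          - ∑ j, (starRingEnd ℂ) (Qop P v j) * v j
          + ∑ j, (starRingEnd ℂ) (Qop P v j) * Qop P v j := by
      rw [← Finset.sum_sub_distrib, ← Finset.sum_sub_distrib, ← Finset.sum_add_distrib]
      exact Finset.sum_congr rfl fun j _ => by rw [map_sub]; ring
    rw [expand]
    linear_combination e1 - e2
  refine Complex.ofReal_injective ?_
  rw [Complex.ofReal_add, csum_abs_sq, csum_abs_sq, csum_abs_sq]
  simp_rw [hqdef, hsimp2]
  exact main
section HatLemmas
variable (L : TubalScalar p ≃ₗ[ℂ] TubalScalar p)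

lemma hat_tmul (a b : TubalScalar p) (k : Fin p) :
    L (tmul L a b) k = L a k * L b k := by
  simp [tmul]

lemma hat_tMul {I J K : Type*} [Fintype J] (A : I → J → TubalScalar p)
    (B : J → K → TubalScalar p) (i : I) (k' : K) (k : Fin p) :
    L (tMul L A B i k') k = ∑ j, L (A i j) k * L (B j k') k := by
  simp [tMul, tmul, map_sum, Finset.sum_apply]

lemma hat_tHerm {I J : Type*} (A : I → J → TubalScalar p) (j : J) (i : I) (k : Fin p) :
    L (tHerm L A j i) k = (starRingEnd ℂ) (L (A i j) k) := by
  simp [tHerm]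

lemma hat_tId {I : Type*} [DecidableEq I] (i j : I) (k : Fin p) :
    L (tId L i j) k = if i = j then 1 else 0 := by
  rcases eq_or_ne i j with h | h <;> simp [tId, h]

end HatLemmas
lemma hat_modeProd {N : ℕ} (L : TubalScalar p ≃ₗ[ℂ] TubalScalar p) (I : Fin N → ℕ)
    (A : ((m : Fin N) → Fin (I m)) → TubalScalar p) (n : Fin N) (J : ℕ)
    (U : Fin J → Fin (I n) → TubalScalar p)
    (idx : (m : Fin N) → Fin (Function.update I n J m)) (k : Fin p) :
    L (modeProd L I A n J U idx) k
      = ∑ i : Fin (I n),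
          L (A fun m =>
              if h : m = n then Fin.cast (congrArg I h).symm i
              else Fin.cast (by rw [Function.update_of_ne h]) (idx m)) k
            * L (U (Fin.cast (by rw [Function.update_self]) (idx n)) i) k := by
  simp [modeProd, map_sum, Finset.sum_apply, tmul]

lemma sum_abs_sq_congr_of_unitary (W : TubalScalar p →ₗ[ℂ] TubalScalar p)
    (hW : ∀ x y : TubalScalar p, ∑ k, star (W x k) * W y k = ∑ k, star (x k) * y k)
    (x : TubalScalar p) :
    ∑ k, ‖W x k‖ ^ 2 = ∑ k, ‖x k‖ ^ 2 := by
  have h := hW x x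
  simp only [Complex.star_def] at h
  refine Complex.ofReal_injective ?_
  rw [csum_abs_sq, csum_abs_sq]
  exact h

lemma hat_abs_sq (L : TubalScalar p ≃ₗ[ℂ] TubalScalar p)
    (c : ℂ) (W : TubalScalar p →ₗ[ℂ] TubalScalar p)
    (hW : ∀ x y : TubalScalar p, ∑ k, star (W x k) * W y k = ∑ k, star (x k) * y k)
    (hLW : ∀ x, L x = c • W x) (x : TubalScalar p) :
    ∑ k, ‖L x k‖ ^ 2 = ‖c‖ ^ 2 * ∑ k, ‖x k‖ ^ 2 := by
  calc ∑ k, ‖L x k‖ ^ 2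
      = ∑ k, ‖c‖ ^ 2 * ‖W x k‖ ^ 2 := by
        refine Finset.sum_congr rfl fun k _ => ?_
        rw [hLW]
        simp [mul_pow]
    _ = ‖c‖ ^ 2 * ∑ k, ‖W x k‖ ^ 2 := by rw [Finset.mul_sum]
    _ = _ := by rw [sum_abs_sq_congr_of_unitary W hW x]

lemma tnorm_sq_hat {ι : Type*} [Fintype ι] (L : TubalScalar p ≃ₗ[ℂ] TubalScalar p)
    (c : ℂ) (W : TubalScalar p →ₗ[ℂ] TubalScalar p)
    (hW : ∀ x y : TubalScalar p, ∑ k, star (W x k) * W y k = ∑ k, star (x k) * y k)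
    (hLW : ∀ x, L x = c • W x) (X : ι → TubalScalar p) :
    ‖c‖ ^ 2 * tnorm X ^ 2 = ∑ i, ∑ k, ‖L (X i) k‖ ^ 2 := by
  rw [tnorm, Real.sq_sqrt (by positivity), Finset.mul_sum]
  exact Finset.sum_congr rfl fun i _ => (hat_abs_sq L c W hW hLW (X i)).symm
lemma gram_herm {κ ρ : Type*} [Fintype ρ] (u : κ → ρ → ℂ) (j i : κ) :
    (starRingEnd ℂ) (∑ r, u j r * (starRingEnd ℂ) (u i r))
      = ∑ r, u i r * (starRingEnd ℂ) (u j r) := by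
  simp only [map_sum, map_mul, Complex.conj_conj]
  exact Finset.sum_congr rfl fun r _ => by ring

lemma gram_proj {κ ρ : Type*} [Fintype κ] [Fintype ρ] [DecidableEq ρ] (u : κ → ρ → ℂ)
    (hU : ∀ r r', ∑ i, (starRingEnd ℂ) (u i r) * u i r' = if r = r' then 1 else 0)
    (j l : κ) :
    ∑ i, (∑ r, u j r * (starRingEnd ℂ) (u i r)) * (∑ r, u i r * (starRingEnd ℂ) (u l r))
      = ∑ r, u j r * (starRingEnd ℂ) (u l r) := by
  calc ∑ i, (∑ r, u j r * (starRingEnd ℂ) (u i r)) * (∑ r, u i r * (starRingEnd ℂ) (u l r))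
      = ∑ i : κ, ∑ s, ∑ r, (u j r * (starRingEnd ℂ) (u l s)) * ((starRingEnd ℂ) (u i r) * u i s) := by
        refine Finset.sum_congr rfl fun i _ => ?_
        simp only [Finset.sum_mul, Finset.mul_sum]
        exact Finset.sum_congr rfl fun s _ => Finset.sum_congr rfl fun r _ => by ring
    _ = ∑ s, ∑ r, (u j r * (starRingEnd ℂ) (u l s)) * ∑ i, ((starRingEnd ℂ) (u i r) * u i s) := by
        rw [Finset.sum_comm]
        refine Finset.sum_congr rfl fun s _ => ?_
        rw [Finset.sum_comm]
        exact Finset.sum_congr rfl fun r _ => by rw [Finset.mul_sum]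
    _ = ∑ s, ∑ r, (u j r * (starRingEnd ℂ) (u l s)) * (if r = s then 1 else 0) := by
        simp_rw [hU]
    _ = ∑ r, u j r * (starRingEnd ℂ) (u l r) := by
        simp [mul_ite, Finset.sum_ite_eq', Finset.sum_ite_eq]
lemma splitAt_symm_apply_self {N : ℕ} (I : Fin N → ℕ) (n : Fin N) (j : Fin (I n))
    (rest : ∀ m : {m : Fin N // m ≠ n}, Fin (I m)) :
    (Equiv.piSplitAt n fun m => Fin (I m)).symm (j, rest) n = j := by
  simp [Equiv.piSplitAt]

lemma splitAt_symm_update {N : ℕ} (I : Fin N → ℕ) (n : Fin N) (j i : Fin (I n))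
    (rest : ∀ m : {m : Fin N // m ≠ n}, Fin (I m)) :
    Function.update ((Equiv.piSplitAt n fun m => Fin (I m)).symm (j, rest)) n i
      = (Equiv.piSplitAt n fun m => Fin (I m)).symm (i, rest) := by
  funext m
  rcases eq_or_ne m n with h | h
  · subst h; simp [Equiv.piSplitAt]
  · simp [Equiv.piSplitAt, Function.update_of_ne h, h]

lemma sum_reindex {N : ℕ} (I : Fin N → ℕ) (n : Fin N)
    (f : ((m : Fin N) → Fin (I m)) → ℝ) :
    ∑ idx, f idx
      = ∑ rest : ∀ m : {m : Fin N // m ≠ n}, Fin (I m), ∑ j : Fin (I n),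
          f ((Equiv.piSplitAt n fun m => Fin (I m)).symm (j, rest)) := by
  rw [← Equiv.sum_comp (Equiv.piSplitAt n fun m => Fin (I m)).symm f,
    Fintype.sum_prod_type, Finset.sum_comm]

lemma hat_modeProd_reindex {N : ℕ} (L : TubalScalar p ≃ₗ[ℂ] TubalScalar p) (I : Fin N → ℕ)
    (A : ((m : Fin N) → Fin (I m)) → TubalScalar p) (n : Fin N)
    (Umat : Fin (I n) → Fin (I n) → TubalScalar p) (k : Fin p) :
    ∑ idx' : (m : Fin N) → Fin (Function.update I n (I n) m),
        ‖L (modeProd L I A n (I n) Umat idx') k‖ ^ 2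
      = ∑ rest : ∀ m : {m : Fin N // m ≠ n}, Fin (I m), ∑ j : Fin (I n),
          ‖∑ i : Fin (I n),
            L (A ((Equiv.piSplitAt n fun m => Fin (I m)).symm (i, rest))) k
              * L (Umat j i) k‖ ^ 2 := by
  have hI : Function.update I n (I n) = I := Function.update_eq_self n I
  set E : ((m : Fin N) → Fin (Function.update I n (I n) m)) ≃ ((m : Fin N) → Fin (I m)) :=
    Equiv.piCongrRight (fun m => finCongr (congrFun hI m)) with hE
  calc ∑ idx' : (m : Fin N) → Fin (Function.update I n (I n) m),
        ‖L (modeProd L I A n (I n) Umat idx') k‖ ^ 2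
      = ∑ idx' : (m : Fin N) → Fin (Function.update I n (I n) m),
          ‖∑ i : Fin (I n),
            L (A (Function.update (E idx') n i)) k * L (Umat (E idx' n) i) k‖ ^ 2 := by
        refine Finset.sum_congr rfl fun idx' _ => ?_
        rw [hat_modeProd]
        refine congrArg (fun z => ‖z‖ ^ 2) ?_
        refine Finset.sum_congr rfl fun i _ => ?_
        have hY : (Fin.cast (by rw [Function.update_self]) (idx' n) : Fin (I n)) = E idx' n := by
          apply Fin.ext
          simp [hE, Fin.coe_cast]
        have hX : (fun m =>
            if h : m = n then Fin.cast (congrArg I h).symm i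
            else Fin.cast (by rw [Function.update_of_ne h]) (idx' m)) =
            Function.update (E idx') n i := by
          funext m
          rcases eq_or_ne m n with h | h
          · subst h
            simp only [dif_pos rfl, Function.update_self]
            apply Fin.ext
            simp [Fin.coe_cast]
          · simp only [dif_neg h, Function.update_of_ne h]
            apply Fin.ext
            simp [hE, Fin.coe_cast]
        rw [hX, hY]
    _ = ∑ idx : (m : Fin N) → Fin (I m),
          ‖∑ i : Fin (I n),
            L (A (Function.update idx n i)) k * L (Umat (idx n) i) k‖ ^ 2 :=
        Equiv.sum_comp E (fun idx => ‖∑ i : Fin (I n),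
          L (A (Function.update idx n i)) k * L (Umat (idx n) i) k‖ ^ 2)
    _ = ∑ rest : ∀ m : {m : Fin N // m ≠ n}, Fin (I m), ∑ j : Fin (I n),
          ‖∑ i : Fin (I n),
            L (A (Function.update ((Equiv.piSplitAt n fun m => Fin (I m)).symm (j, rest)) n i)) k
              * L (Umat ((Equiv.piSplitAt n fun m => Fin (I m)).symm (j, rest) n) i) k‖ ^ 2 :=
        sum_reindex I n _
    _ = _ := by
        refine Finset.sum_congr rfl fun rest _ => Finset.sum_congr rfl fun j _ => ?_
        rw [splitAt_symm_apply_self]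
        refine congrArg (fun z => ‖z‖ ^ 2) ?_
        refine Finset.sum_congr rfl fun i _ => ?_
        rw [splitAt_symm_update]
lemma perk {N : ℕ} (L : TubalScalar p ≃ₗ[ℂ] TubalScalar p) (I : Fin N → ℕ)
    (A : ((m : Fin N) → Fin (I m)) → TubalScalar p) (n : Fin N) (R : ℕ)
    (Ub : Fin (I n) → Fin R → TubalScalar p)
    (hPU : tMul L (tHerm L Ub) Ub = tId L) (k : Fin p) :
    ∑ idx' : (m : Fin N) → Fin (Function.update I n (I n) m),
        ‖L (modeProd L I A n (I n) (tMul L Ub (tHerm L Ub)) idx') k‖ ^ 2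
      + ∑ idx' : (m : Fin N) → Fin (Function.update I n (I n) m),
          ‖L (modeProd L I A n (I n)
            ((tId L - tMul L Ub (tHerm L Ub) :
              Fin (I n) → Fin (I n) → TubalScalar p)) idx') k‖ ^ 2
      = ∑ idx : (m : Fin N) → Fin (I m), ‖L (A idx) k‖ ^ 2 := by
  have hu : ∀ r r' : Fin R, ∑ i, (starRingEnd ℂ) (L (Ub i r) k) * L (Ub i r') k
      = if r = r' then 1 else 0 := by
    intro r r'
    have h := congrArg (fun x : TubalScalar p => L x k) (congrFun (congrFun hPU r) r')
    rw [hat_tMul, hat_tId] at h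
    simp_rw [hat_tHerm] at h
    exact h
  have hPmhat : ∀ j i : Fin (I n), L (tMul L Ub (tHerm L Ub) j i) k
      = ∑ r, L (Ub j r) k * (starRingEnd ℂ) (L (Ub i r) k) := by
    intro j i
    rw [hat_tMul]
    exact Finset.sum_congr rfl fun r _ => by rw [hat_tHerm]
  have hQhat : ∀ j i : Fin (I n), L ((tId L - tMul L Ub (tHerm L Ub) :
      Fin (I n) → Fin (I n) → TubalScalar p) j i) k
      = (if j = i then (1:ℂ) else 0)
          - ∑ r, L (Ub j r) k * (starRingEnd ℂ) (L (Ub i r) k) := by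
    intro j i
    have hsub : (tId L - tMul L Ub (tHerm L Ub) :
        Fin (I n) → Fin (I n) → TubalScalar p) j i
        = tId L j i - tMul L Ub (tHerm L Ub) j i := rfl
    rw [hsub, map_sub, Pi.sub_apply, hat_tId, hPmhat]
  rw [hat_modeProd_reindex, hat_modeProd_reindex,
    sum_reindex I n (fun idx => ‖L (A idx) k‖ ^ 2), ← Finset.sum_add_distrib]
  refine Finset.sum_congr rfl fun rest _ => ?_
  simp_rw [hPmhat, hQhat]
  exact proj_pyth (fun j i => ∑ r, L (Ub j r) k * (starRingEnd ℂ) (L (Ub i r) k))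
    (fun j i => gram_herm (fun i r => L (Ub i r) k) j i)
    (fun j l => gram_proj (fun i r => L (Ub i r) k) hu j l)
    (fun i => L (A ((Equiv.piSplitAt n fun m => Fin (I m)).symm (i, rest))) k)

theorem modeProd_projection_pythagoras {N : ℕ}
    (L : TubalScalar p ≃ₗ[ℂ] TubalScalar p)
    (c : ℂ) (W : TubalScalar p →ₗ[ℂ] TubalScalar p) (hc : c ≠ 0)
    (hW : ∀ x y : TubalScalar p, ∑ k, star (W x k) * W y k = ∑ k, star (x k) * y k)
    (hLW : ∀ x, L x = c • W x)
    (I : Fin N → ℕ) (A : ((m : Fin N) → Fin (I m)) → TubalScalar p)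
    (n : Fin N) (R : ℕ) (hR : R ≤ I n)
    (Ub : Fin (I n) → Fin R → TubalScalar p)
    (hPU : tMul L (tHerm L Ub) Ub = tId L) :
    tnorm (modeProd L I A n (I n) (tMul L Ub (tHerm L Ub))) ^ 2
        + tnorm (modeProd L I A n (I n) (tId L - tMul L Ub (tHerm L Ub))) ^ 2
      = tnorm A ^ 2 ∧
    tnorm (modeProd L I A n (I n) (tMul L Ub (tHerm L Ub))) ≤ tnorm A := by
  have hc2 : (‖c‖ ^ 2 : ℝ) ≠ 0 := pow_ne_zero 2 (norm_ne_zero_iff.mpr hc)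
  have h1 := tnorm_sq_hat L c W hW hLW (modeProd L I A n (I n) (tMul L Ub (tHerm L Ub)))
  have h2 := tnorm_sq_hat L c W hW hLW (modeProd L I A n (I n) (tId L - tMul L Ub (tHerm L Ub)))
  have h3 := tnorm_sq_hat L c W hW hLW A
  rw [Finset.sum_comm] at h1 h2 h3
  have key : ∑ k : Fin p, ∑ idx' : (m : Fin N) → Fin (Function.update I n (I n) m),
        ‖L (modeProd L I A n (I n) (tMul L Ub (tHerm L Ub)) idx') k‖ ^ 2
      + ∑ k : Fin p, ∑ idx' : (m : Fin N) → Fin (Function.update I n (I n) m),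
          ‖L (modeProd L I A n (I n)
            (tId L - tMul L Ub (tHerm L Ub)) idx') k‖ ^ 2
      = ∑ k : Fin p, ∑ idx : (m : Fin N) → Fin (I m), ‖L (A idx) k‖ ^ 2 := by
    rw [← Finset.sum_add_distrib]
    exact Finset.sum_congr rfl fun k _ => perk L I A n R Ub hPU k
  have main : tnorm (modeProd L I A n (I n) (tMul L Ub (tHerm L Ub))) ^ 2
      + tnorm (modeProd L I A n (I n) (tId L - tMul L Ub (tHerm L Ub))) ^ 2
      = tnorm A ^ 2 := by
    refine mul_left_cancel₀ hc2 ?_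
    rw [mul_add, h1, h2, h3]
    exact key
  refine ⟨main, ?_⟩
  have hA0 : (0:ℝ) ≤ tnorm A := Real.sqrt_nonneg _
  have hP0 : (0:ℝ) ≤ tnorm (modeProd L I A n (I n) (tMul L Ub (tHerm L Ub))) :=
    Real.sqrt_nonneg _
  have hsq : tnorm (modeProd L I A n (I n) (tMul L Ub (tHerm L Ub))) ^ 2 ≤ tnorm A ^ 2 := by
    nlinarith [sq_nonneg (tnorm (modeProd L I A n (I n) (tId L - tMul L Ub (tHerm L Ub))))]
  calc tnorm (modeProd L I A n (I n) (tMul L Ub (tHerm L Ub)))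
      = Real.sqrt (tnorm (modeProd L I A n (I n) (tMul L Ub (tHerm L Ub))) ^ 2) :=
        (Real.sqrt_sq hP0).symm
    _ ≤ Real.sqrt (tnorm A ^ 2) := Real.sqrt_le_sqrt hsq
    _ = tnorm A := Real.sqrt_sq hA0
end

section
/- Exact error decomposition for multilinear tubal projections: assume L = c·W where c ∈ ℂ is nonzero and W : ℂ^p → ℂ^p is unitary for the standard Hermitian inner product. Let A ∈ ℂ_p^{I₁×⋯×I_N} be a tubal tensor of order N, let Ŭ_n ∈ ℂ_p^{I_n×R_n} (I_n ≥ R_n, n = 1,…,N) be partially unitary tubal matrices, and set Ă := A *₁ (Ŭ₁*Ŭ₁^H) *₂ (Ŭ₂*Ŭ₂^H) ⋯ *_N (Ŭ_N*Ŭ_N^H). Then ‖A − Ă‖² = Σ_{n=1}^{N} ‖A *₁ (Ŭ₁*Ŭ₁^H) ⋯ *_{n−1} (Ŭ_{n−1}*Ŭ_{n−1}^H) *_n (𝓘 − Ŭ_n*Ŭ_n^H)‖². -/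
/-!
STATEMENT 16: Exact error decomposition for multilinear tubal projections:
‖A − Ă‖² = Σ_{n=1}^{N} ‖A *₁ (Ŭ₁Ŭ₁^H) ⋯ *_{n−1} (Ŭ_{n−1}Ŭ_{n−1}^H) *_n (𝓘 − Ŭ_nŬ_n^H)‖²,
where Ă := A *₁ (Ŭ₁Ŭ₁^H) ⋯ *_N (Ŭ_NŬ_N^H) and each Ŭ_n is partially unitary
(assuming L = c·W with W unitary).
-/

open scoped BigOperators

variable {p : ℕ}

open scoped BigOperators

noncomputable section
namespace TubalAux

variable {N : ℕ} {I : Fin N → ℕ}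

/-- classical multilinear product, per slice -/
def cmulti (I : Fin N → ℕ) (a : ((m : Fin N) → Fin (I m)) → ℂ)
    (X : (n : Fin N) → Fin (I n) → Fin (I n) → ℂ) :
    ((m : Fin N) → Fin (I m)) → ℂ :=
  fun idx => ∑ jdx : (m : Fin N) → Fin (I m), a jdx * ∏ n, X n (idx n) (jdx n)

def cinner (I : Fin N → ℕ) (x y : ((m : Fin N) → Fin (I m)) → ℂ) : ℂ :=
  ∑ idx, star (x idx) * y idx

lemma cinner_cmulti (a : ((m : Fin N) → Fin (I m)) → ℂ)
    (X Y : (n : Fin N) → Fin (I n) → Fin (I n) → ℂ) :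
    cinner I (cmulti I a X) (cmulti I a Y)
      = ∑ j : (m : Fin N) → Fin (I m), ∑ j' : (m : Fin N) → Fin (I m),
          star (a j) * a j' * ∏ m, (∑ i, star (X m i (j m)) * Y m i (j' m)) := by
  unfold cinner cmulti
  simp only [star_sum, star_mul', star_prod, Finset.sum_mul_sum]
  rw [Finset.sum_comm]
  refine Finset.sum_congr rfl fun j _ => ?_
  rw [Finset.sum_comm]
  refine Finset.sum_congr rfl fun j' _ => ?_
  have : ∀ idx : (m : Fin N) → Fin (I m),
      (star (a j) * ∏ n, star (X n (idx n) (j n))) * (a j' * ∏ n, Y n (idx n) (j' n))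
        = star (a j) * a j' * ∏ n, (star (X n (idx n) (j n)) * Y n (idx n) (j' n)) := by
    intro idx; rw [Finset.prod_mul_distrib]; ring
  rw [Finset.sum_congr rfl fun idx _ => this idx, ← Finset.mul_sum]
  congr 1
  exact (Fintype.prod_sum fun m i => star (X m i (j m)) * Y m i (j' m)).symm


def cdelta {q : ℕ} : Fin q → Fin q → ℂ := fun i j => if i = j then 1 else 0

def Dmat {N : ℕ} {I : Fin N → ℕ} (P : (n : Fin N) → Fin (I n) → Fin (I n) → ℂ)
    (n : Fin N) : (m : Fin N) → Fin (I m) → Fin (I m) → ℂ :=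
  fun m => if m < n then P m
    else if m = n then (fun i j => cdelta i j - P m i j) else cdelta

lemma cmulti_delta (a : ((m : Fin N) → Fin (I m)) → ℂ)
    (idx : (m : Fin N) → Fin (I m)) :
    cmulti I a (fun _ => cdelta) idx = a idx := by
  unfold cmulti cdelta
  rw [Finset.sum_eq_single idx]
  · simp
  · intro jdx _ hne
    have : ∃ n, idx n ≠ jdx n := by
      by_contra h
      push_neg at h
      exact hne (funext fun n => (h n).symm)
    obtain ⟨n, hn⟩ := this
    rw [Finset.prod_eq_zero (Finset.mem_univ n) (by simp [hn]), mul_zero]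
  · simp

lemma cmulti_sub (a : ((m : Fin N) → Fin (I m)) → ℂ)
    (X Y Z : (n : Fin N) → Fin (I n) → Fin (I n) → ℂ) (n : Fin N)
    (hX : ∀ m, m ≠ n → X m = Y m) (hZ : ∀ m, m ≠ n → Z m = X m)
    (hn : ∀ i j, Z n i j = X n i j - Y n i j)
    (idx : (m : Fin N) → Fin (I m)) :
    cmulti I a X idx - cmulti I a Y idx = cmulti I a Z idx := by
  unfold cmulti
  rw [← Finset.sum_sub_distrib]
  refine Finset.sum_congr rfl fun jdx _ => ?_
  rw [← mul_sub]
  congr 1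
  rw [← Finset.mul_prod_erase Finset.univ _ (Finset.mem_univ n),
      ← Finset.mul_prod_erase Finset.univ _ (Finset.mem_univ n),
      ← Finset.mul_prod_erase Finset.univ (fun m => Z m (idx m) (jdx m)) (Finset.mem_univ n)]
  have h1 : ∏ m ∈ Finset.univ.erase n, X m (idx m) (jdx m)
      = ∏ m ∈ Finset.univ.erase n, Z m (idx m) (jdx m) :=
    Finset.prod_congr rfl fun m hm => by rw [hZ m (Finset.mem_erase.1 hm).1]
  have h2 : ∏ m ∈ Finset.univ.erase n, Y m (idx m) (jdx m)
      = ∏ m ∈ Finset.univ.erase n, Z m (idx m) (jdx m) :=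
    Finset.prod_congr rfl fun m hm => by
      rw [← hX m (Finset.mem_erase.1 hm).1, hZ m (Finset.mem_erase.1 hm).1]
  rw [h1, h2, ← sub_mul, ← hn]

lemma telescope (a : ((m : Fin N) → Fin (I m)) → ℂ)
    (P : (n : Fin N) → Fin (I n) → Fin (I n) → ℂ)
    (idx : (m : Fin N) → Fin (I m)) :
    a idx - cmulti I a P idx = ∑ n : Fin N, cmulti I a (Dmat P n) idx := by
  set f : ℕ → ℂ := fun t =>
    cmulti I a (fun m => if (m : ℕ) < t then P m else cdelta) idx with hf
  have h0 : a idx = f 0 := by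
    rw [hf]; simp only [Nat.not_lt_zero, if_false]
    exact (cmulti_delta a idx).symm
  have hN : cmulti I a P idx = f N := by
    rw [hf]
    congr 1
    funext m
    rw [if_pos m.isLt]
  have hstep : ∀ n : Fin N, cmulti I a (Dmat P n) idx = f (n : ℕ) - f ((n : ℕ) + 1) := by
    intro n
    refine (cmulti_sub a _ _ _ n ?_ ?_ ?_ idx).symm
    · intro m hm
      have hiff : (m : ℕ) < (n : ℕ) ↔ (m : ℕ) < (n : ℕ) + 1 := by
        constructor
        · omega
        · intro h
          rcases Nat.lt_succ_iff_lt_or_eq.1 h with h | h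
          · exact h
          · exact absurd (Fin.ext h) hm
      simp only [hiff]
    · intro m hm
      by_cases h : (m : ℕ) < (n : ℕ) <;>
        simp [Dmat, Fin.lt_def, h, hm]
    · intro i j
      simp [Dmat, Fin.lt_def]
  rw [h0, hN]
  calc f 0 - f N = ∑ t ∈ Finset.range N, (f t - f (t + 1)) := (Finset.sum_range_sub' f N).symm
    _ = ∑ n : Fin N, (f (n : ℕ) - f ((n : ℕ) + 1)) :=
        (Fin.sum_univ_eq_sum_range (fun t => f t - f (t + 1)) N).symm
    _ = ∑ n : Fin N, cmulti I a (Dmat P n) idx := by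
        exact Finset.sum_congr rfl fun n _ => (hstep n).symm

end TubalAux

namespace TubalAux

lemma cross_zero (a : ((m : Fin N) → Fin (I m)) → ℂ)
    (P : (n : Fin N) → Fin (I n) → Fin (I n) → ℂ)
    (hH : ∀ n i j, star (P n i j) = P n j i)
    (hId : ∀ n i j, ∑ k, P n i k * P n k j = P n i j)
    (n m' : Fin N) (hnm : n < m') :
    cinner I (cmulti I a (Dmat P n)) (cmulti I a (Dmat P m')) = 0 := by
  rw [cinner_cmulti]
  refine Finset.sum_eq_zero fun j _ => Finset.sum_eq_zero fun j' _ => ?_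
  rw [Finset.prod_eq_zero (Finset.mem_univ n), mul_zero]
  have h1 : Dmat P n n = fun i k => cdelta i k - P n i k := by
    simp [Dmat, lt_irrefl]
  have h2 : Dmat P m' n = P n := by
    simp [Dmat, hnm]
  rw [h1, h2]
  have : ∀ i, star (cdelta i (j n) - P n i (j n)) * P n i (j' n)
      = (cdelta (j n) i - P n (j n) i) * P n i (j' n) := by
    intro i
    congr 1
    rw [star_sub, hH]
    congr 1
    unfold cdelta
    rcases eq_or_ne i (j n) with h | h <;> simp [h, eq_comm]
  rw [Finset.sum_congr rfl fun i _ => this i]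
  simp only [sub_mul, Finset.sum_sub_distrib, hId]
  have : ∑ i, cdelta (j n) i * P n i (j' n) = P n (j n) (j' n) := by
    rw [Finset.sum_eq_single (j n)]
    · simp [cdelta]
    · intro b _ hb; simp [cdelta, Ne.symm hb]
    · simp
  rw [this, sub_self]

lemma cinner_conj (x y : ((m : Fin N) → Fin (I m)) → ℂ) :
    cinner I x y = star (cinner I y x) := by
  unfold cinner
  rw [star_sum]
  exact Finset.sum_congr rfl fun idx _ => by rw [star_mul', star_star, mul_comm]

lemma cinner_self (x : ((m : Fin N) → Fin (I m)) → ℂ) :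
    cinner I x x = ((∑ idx, Complex.normSq (x idx) : ℝ) : ℂ) := by
  unfold cinner
  push_cast
  exact Finset.sum_congr rfl fun idx _ => by
    rw [Complex.star_def, Complex.normSq_eq_conj_mul_self]

lemma classical_main (a : ((m : Fin N) → Fin (I m)) → ℂ)
    (P : (n : Fin N) → Fin (I n) → Fin (I n) → ℂ)
    (hH : ∀ n i j, star (P n i j) = P n j i)
    (hId : ∀ n i j, ∑ k, P n i k * P n k j = P n i j) :
    ∑ idx, Complex.normSq (a idx - cmulti I a P idx)
      = ∑ n : Fin N, ∑ idx, Complex.normSq (cmulti I a (Dmat P n) idx) := by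
  have key : cinner I (fun idx => a idx - cmulti I a P idx)
      (fun idx => a idx - cmulti I a P idx)
      = ∑ n : Fin N, cinner I (cmulti I a (Dmat P n)) (cmulti I a (Dmat P n)) := by
    have hexp : (fun idx => a idx - cmulti I a P idx)
        = fun idx => ∑ n : Fin N, cmulti I a (Dmat P n) idx := by
      funext idx; exact telescope a P idx
    rw [hexp]
    unfold cinner
    simp only [star_sum, Finset.sum_mul_sum]
    rw [Finset.sum_comm]
    refine Finset.sum_congr rfl fun n _ => ?_
    rw [Finset.sum_comm]
    refine (Finset.sum_eq_single n (fun m _ hmn => ?_) (by simp)).trans rfl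
    have : (∑ idx, star (cmulti I a (Dmat P n) idx) * cmulti I a (Dmat P m) idx)
        = cinner I (cmulti I a (Dmat P n)) (cmulti I a (Dmat P m)) := rfl
    rw [this]
    rcases lt_or_gt_of_ne hmn with h | h
    · rw [cinner_conj, cross_zero a P hH hId m n h, star_zero]
    · exact cross_zero a P hH hId n m h
  have lhs := cinner_self (I := I) (fun idx => a idx - cmulti I a P idx)
  rw [lhs] at key
  have rhs : ∀ n : Fin N, cinner I (cmulti I a (Dmat P n)) (cmulti I a (Dmat P n))
      = ((∑ idx, Complex.normSq (cmulti I a (Dmat P n) idx) : ℝ) : ℂ) :=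
    fun n => cinner_self _
  simp only [rhs] at key
  exact_mod_cast key

end TubalAux

namespace TubalAux

variable {p : ℕ} {N : ℕ} {I : Fin N → ℕ}

section Bridge
variable (L : TubalScalar p ≃ₗ[ℂ] TubalScalar p)

/-- entries of L applied to multiProd -/
lemma hat_multiProd (A : ((m : Fin N) → Fin (I m)) → TubalScalar p)
    (U : (n : Fin N) → Fin (I n) → Fin (I n) → TubalScalar p)
    (idx : (m : Fin N) → Fin (I m)) (k : Fin p) :
    L (multiProd L I I A U idx) k
      = ∑ jdx : (m : Fin N) → Fin (I m),
          L (A jdx) k * ∏ n, L (U n (idx n) (jdx n)) k := by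
  unfold multiProd
  rw [map_sum]
  rw [Finset.sum_apply]
  refine Finset.sum_congr rfl fun jdx _ => ?_
  rw [LinearEquiv.apply_symm_apply, Pi.mul_apply, Finset.prod_apply]

lemma hat_tId' {J : Type*} [DecidableEq J] (i j : J) (k : Fin p) :
    L (tId (I := J) L i j) k = (if i = j then 1 else 0 : ℂ) := by
  unfold tId
  rcases eq_or_ne i j with h | h
  · simp [h]
  · simp [h]

lemma hat_tMul_herm {J : Type*} {Rt : Type*} [Fintype Rt]
    (Un : J → Rt → TubalScalar p) (i j : J) (k : Fin p) :
    L (tMul L Un (tHerm L Un) i j) k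
      = ∑ r, L (Un i r) k * star (L (Un j r) k) := by
  unfold tMul tHerm tmul
  rw [map_sum, Finset.sum_apply]
  refine Finset.sum_congr rfl fun r _ => ?_
  rw [LinearEquiv.apply_symm_apply, LinearEquiv.apply_symm_apply, Pi.mul_apply,
    Pi.star_apply]

lemma hat_unitary {J Rt : Type*} [Fintype J] [DecidableEq Rt]
    (Un : J → Rt → TubalScalar p)
    (h : tMul L (tHerm L Un) Un = tId L) (r r' : Rt) (k : Fin p) :
    ∑ i, star (L (Un i r) k) * L (Un i r') k = (if r = r' then 1 else 0 : ℂ) := by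
  have := congrFun (congrFun h r) r'
  unfold tMul tHerm tmul at this
  have h2 := congrFun (congrArg L this) k
  rw [map_sum, Finset.sum_apply] at h2
  rw [← hat_tId' L r r' k, ← h2]
  refine Finset.sum_congr rfl fun i _ => ?_
  rw [LinearEquiv.apply_symm_apply, LinearEquiv.apply_symm_apply, Pi.mul_apply,
    Pi.star_apply]

lemma Phat_herm {J Rt : Type*} [Fintype Rt] (u : J → Rt → ℂ) (i j : J) :
    star (∑ r, u i r * star (u j r)) = ∑ r, u j r * star (u i r) := by
  rw [star_sum]
  exact Finset.sum_congr rfl fun r _ => by rw [star_mul', star_star]; ring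

lemma Phat_idem {J Rt : Type*} [Fintype J] [Fintype Rt] [DecidableEq Rt] (u : J → Rt → ℂ)
    (hu : ∀ r r', ∑ i, star (u i r) * u i r' = if r = r' then 1 else 0) (i j : J) :
    ∑ s, (∑ r, u i r * star (u s r)) * (∑ r', u s r' * star (u j r'))
      = ∑ r, u i r * star (u j r) := by
  have step : ∀ s, (∑ r, u i r * star (u s r)) * (∑ r', u s r' * star (u j r'))
      = ∑ r, ∑ r', (u i r * star (u j r')) * (star (u s r) * u s r') := by
    intro s
    rw [Finset.sum_mul_sum]
    exact Finset.sum_congr rfl fun r _ => Finset.sum_congr rfl fun r' _ => by ring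
  simp only [step]
  rw [Finset.sum_comm]
  refine Finset.sum_congr rfl fun r _ => ?_
  rw [Finset.sum_comm]
  have : ∀ r', ∑ s, u i r * star (u j r') * (star (u s r) * u s r')
      = u i r * star (u j r') * (if r = r' then 1 else 0) := by
    intro r'
    rw [← Finset.mul_sum, hu]
  simp only [this, mul_ite, mul_one, mul_zero]
  simp

lemma normSq_L_sum (L : TubalScalar p ≃ₗ[ℂ] TubalScalar p)
    (c : ℂ) (W : TubalScalar p →ₗ[ℂ] TubalScalar p)
    (hW : ∀ x y : TubalScalar p, ∑ k, star (W x k) * W y k = ∑ k, star (x k) * y k)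
    (hLW : ∀ x, L x = c • W x) (x : TubalScalar p) :
    ∑ k, Complex.normSq (L x k) = Complex.normSq c * ∑ k, Complex.normSq (x k) := by
  have hWx : (∑ k, Complex.normSq (W x k) : ℝ) = ∑ k, Complex.normSq (x k) := by
    have h1 := hW x x
    have h2 : ((∑ k, Complex.normSq (W x k) : ℝ) : ℂ)
        = ((∑ k, Complex.normSq (x k) : ℝ) : ℂ) := by
      push_cast
      calc (∑ k, (Complex.normSq (W x k) : ℂ))
          = ∑ k, star (W x k) * W x k := by
            refine Finset.sum_congr rfl fun k _ => ?_
            rw [Complex.star_def, ← Complex.normSq_eq_conj_mul_self]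
        _ = ∑ k, star (x k) * x k := h1
        _ = ∑ k, (Complex.normSq (x k) : ℂ) := by
            refine Finset.sum_congr rfl fun k _ => ?_
            rw [Complex.star_def, ← Complex.normSq_eq_conj_mul_self]
    exact_mod_cast h2
  simp only [hLW, Pi.smul_apply, smul_eq_mul, Complex.normSq_mul, ← Finset.mul_sum]
  rw [hWx]

lemma tnorm_sq_eq (L : TubalScalar p ≃ₗ[ℂ] TubalScalar p)
    (c : ℂ) (W : TubalScalar p →ₗ[ℂ] TubalScalar p) (hc : c ≠ 0)
    (hW : ∀ x y : TubalScalar p, ∑ k, star (W x k) * W y k = ∑ k, star (x k) * y k)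
    (hLW : ∀ x, L x = c • W x) {ι : Type*} [Fintype ι] (X : ι → TubalScalar p) :
    tnorm X ^ 2 = (Complex.normSq c)⁻¹ * ∑ k : Fin p, ∑ i, Complex.normSq (L (X i) k) := by
  have hc2 : Complex.normSq c ≠ 0 := by
    simpa [Complex.normSq_eq_zero] using hc
  unfold tnorm
  rw [Real.sq_sqrt (by positivity)]
  simp only [Complex.sq_norm]
  have hswap : ∑ k : Fin p, ∑ i, Complex.normSq (L (X i) k)
      = ∑ i, ∑ k, Complex.normSq (L (X i) k) := Finset.sum_comm
  rw [hswap]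
  have hrw : ∀ i, ∑ k, Complex.normSq (L (X i) k)
      = Complex.normSq c * ∑ k, Complex.normSq (X i k) :=
    fun i => normSq_L_sum L c W hW hLW (X i)
  simp only [hrw]
  rw [← Finset.mul_sum, ← mul_assoc, inv_mul_cancel₀ hc2, one_mul]

end Bridge
end TubalAux

open TubalAux in
theorem multilinear_projection_error_decomposition {N : ℕ}
    (L : TubalScalar p ≃ₗ[ℂ] TubalScalar p)
    (c : ℂ) (W : TubalScalar p →ₗ[ℂ] TubalScalar p) (hc : c ≠ 0)
    (hW : ∀ x y : TubalScalar p, ∑ k, star (W x k) * W y k = ∑ k, star (x k) * y k)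
    (hLW : ∀ x, L x = c • W x)
    (I : Fin N → ℕ) (A : ((m : Fin N) → Fin (I m)) → TubalScalar p)
    (R : Fin N → ℕ) (hR : ∀ n, R n ≤ I n)
    (Ub : (n : Fin N) → Fin (I n) → Fin (R n) → TubalScalar p)
    (hPU : ∀ n, tMul L (tHerm L (Ub n)) (Ub n) = tId L) :
    tnorm (A - multiProd L I I A (fun m => tMul L (Ub m) (tHerm L (Ub m)))) ^ 2
      = ∑ n : Fin N,
          tnorm (multiProd L I I A (fun m =>
            if m < n then tMul L (Ub m) (tHerm L (Ub m))
            else if m = n then tId L - tMul L (Ub m) (tHerm L (Ub m))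
            else tId L)) ^ 2 := by
  classical
  have hu : ∀ (k : Fin p) (n : Fin N) (r r' : Fin (R n)),
      ∑ i, star (L (Ub n i r) k) * L (Ub n i r') k = if r = r' then 1 else 0 :=
    fun k n r r' => hat_unitary L (Ub n) (hPU n) r r' k
  have hMP : ∀ (k : Fin p) idx,
      L (multiProd L I I A (fun m => tMul L (Ub m) (tHerm L (Ub m))) idx) k
        = cmulti I (fun idx' => L (A idx') k)
            (fun n i j => ∑ r, L (Ub n i r) k * star (L (Ub n j r) k)) idx := by
    intro k idx
    rw [hat_multiProd]
    refine Finset.sum_congr rfl fun jdx _ => ?_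
    congr 1
    exact Finset.prod_congr rfl fun m _ => hat_tMul_herm L (Ub m) _ _ k
  have hMPn : ∀ (n : Fin N) (k : Fin p) idx,
      L (multiProd L I I A (fun m =>
        if m < n then tMul L (Ub m) (tHerm L (Ub m))
        else if m = n then tId L - tMul L (Ub m) (tHerm L (Ub m))
        else tId L) idx) k
      = cmulti I (fun idx' => L (A idx') k)
          (Dmat (fun n' i j => ∑ r, L (Ub n' i r) k * star (L (Ub n' j r) k)) n) idx := by
    intro n k idx
    rw [hat_multiProd]
    refine Finset.sum_congr rfl fun jdx _ => ?_
    congr 1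
    refine Finset.prod_congr rfl fun m _ => ?_
    by_cases h1 : m < n
    · rw [if_pos h1]
      have hD : Dmat (fun n' i j => ∑ r, L (Ub n' i r) k * star (L (Ub n' j r) k)) n m
          = fun i j => ∑ r, L (Ub m i r) k * star (L (Ub m j r) k) := by
        simp [Dmat, h1]
      rw [hD]
      exact hat_tMul_herm L (Ub m) _ _ k
    · rw [if_neg h1]
      by_cases h2 : m = n
      · rw [if_pos h2]
        have hD : Dmat (fun n' i j => ∑ r, L (Ub n' i r) k * star (L (Ub n' j r) k)) n m
            = fun i j => cdelta i j - ∑ r, L (Ub m i r) k * star (L (Ub m j r) k) := by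
          simp [Dmat, h1, h2]
        rw [hD]
        rw [Pi.sub_apply, Pi.sub_apply, map_sub, Pi.sub_apply, hat_tId',
          hat_tMul_herm]
        simp [cdelta]
      · rw [if_neg h2]
        have hD : Dmat (fun n' i j => ∑ r, L (Ub n' i r) k * star (L (Ub n' j r) k)) n m
            = fun i j => cdelta i j := by
          funext i j; simp [Dmat, h1, h2]
        rw [hD, hat_tId']
        simp [cdelta]
  rw [tnorm_sq_eq L c W hc hW hLW]
  have hL : ∀ (k : Fin p) idx,
      L ((A - multiProd L I I A (fun m => tMul L (Ub m) (tHerm L (Ub m)))) idx) k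
        = L (A idx) k - cmulti I (fun idx' => L (A idx') k)
            (fun n i j => ∑ r, L (Ub n i r) k * star (L (Ub n j r) k)) idx := by
    intro k idx
    rw [Pi.sub_apply, map_sub, Pi.sub_apply, hMP]
  simp only [hL]
  have hclass : ∀ k : Fin p,
      ∑ idx, Complex.normSq (L (A idx) k - cmulti I (fun idx' => L (A idx') k)
          (fun n i j => ∑ r, L (Ub n i r) k * star (L (Ub n j r) k)) idx)
      = ∑ n : Fin N, ∑ idx, Complex.normSq (cmulti I (fun idx' => L (A idx') k)
          (Dmat (fun n' i j => ∑ r, L (Ub n' i r) k * star (L (Ub n' j r) k)) n) idx) :=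
    fun k => classical_main _ _
      (fun n i j => Phat_herm (fun i' r => L (Ub n i' r) k) i j)
      (fun n i j => Phat_idem (fun i' r => L (Ub n i' r) k) (hu k n) i j)
  simp only [hclass]
  have hRHSn : ∀ n : Fin N,
      tnorm (multiProd L I I A (fun m =>
        if m < n then tMul L (Ub m) (tHerm L (Ub m))
        else if m = n then tId L - tMul L (Ub m) (tHerm L (Ub m))
        else tId L)) ^ 2
      = (Complex.normSq c)⁻¹ * ∑ k : Fin p, ∑ idx,
          Complex.normSq (cmulti I (fun idx' => L (A idx') k)
            (Dmat (fun n' i j => ∑ r, L (Ub n' i r) k * star (L (Ub n' j r) k)) n) idx) := by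
    intro n
    rw [tnorm_sq_eq L c W hc hW hLW]
    congr 1
    refine Finset.sum_congr rfl fun k _ => Finset.sum_congr rfl fun idx _ => ?_
    rw [hMPn]
  simp only [hRHSn]
  rw [← Finset.mul_sum]
  congr 1
  exact Finset.sum_comm
end
end

section
/- Residual of a single-mode t-SVD truncation: assume L = c·W where c ∈ ℂ is nonzero and W : ℂ^p → ℂ^p is unitary for the standard Hermitian inner product. Let A ∈ ℂ_p^{I₁×⋯×I_N} be a tubal tensor of order N, let A_(n) = U * Σ * V^H be a t-SVD of its mode-n unfolding, let 1 ≤ I' ≤ I_n, and let Ū ∈ ℂ_p^{I_n×I'} consist of the first I' tubal columns of U. Then ‖A *_n (𝓘 − Ū*Ū^H)‖² = Σ_{i=I'+1}^{I_n} ‖Σ(i,i)‖², where ‖Σ(i,i)‖ is the Frobenius norm of the i-th diagonal tubal scalar of Σ. -/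
/-!
STATEMENT 17: Residual of a single-mode t-SVD truncation: if A_(n) = U * Σ * V^H is a
t-SVD of the mode-n unfolding, and Ū consists of the first I' tubal columns of U, then
‖A *_n (𝓘 − Ū*Ū^H)‖² = Σ_{i=I'+1}^{I_n} ‖Σ(i,i)‖² (assuming L = c·W with W unitary).
-/

open scoped BigOperators

variable {p : ℕ}

/-- The `i`-th diagonal tubal scalar of a (possibly rectangular) tubal matrix,
taken to be `0` when the diagonal position does not exist. -/
noncomputable def sdiag {a b : ℕ} (S : Fin a → Fin b → TubalScalar p) (i : Fin a) :
    TubalScalar p :=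
  if h : (i : ℕ) < b then S i ⟨(i : ℕ), h⟩ else 0

/-- A tubal matrix is f-diagonal if each of its frontal slices is a diagonal matrix,
i.e. all entries off the (numeric) diagonal are the zero tubal scalar. -/
def fDiag {a b : ℕ} (S : Fin a → Fin b → TubalScalar p) : Prop :=
  ∀ (i : Fin a) (j : Fin b), (i : ℕ) ≠ (j : ℕ) → S i j = 0

/-- The Frobenius norm of a tubal scalar. -/
noncomputable def tnormS (a : TubalScalar p) : ℝ :=
  Real.sqrt (∑ k : Fin p, ‖a k‖ ^ 2)


section Helpers


open Complex in
lemma sum_normSq_ortho {ι κ : Type*} [Fintype ι] [Fintype κ] [DecidableEq κ]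
    (u : ι → κ → ℂ)
    (hu : ∀ j j' : κ, ∑ a, (starRingEnd ℂ) (u a j) * u a j' = if j = j' then 1 else 0)
    (x : κ → ℂ) :
    ∑ a, Complex.normSq (∑ j, u a j * x j) = ∑ j, Complex.normSq (x j) := by
  have key : ∑ a, (∑ j, u a j * x j) * (starRingEnd ℂ) (∑ j, u a j * x j)
      = ∑ j, x j * (starRingEnd ℂ) (x j) := by
    have h1 : ∀ a, (∑ j, u a j * x j) * (starRingEnd ℂ) (∑ j, u a j * x j)
        = ∑ j, ∑ j', (x j * (starRingEnd ℂ) (x j')) * ((starRingEnd ℂ) (u a j') * u a j) := by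
      intro a
      rw [map_sum, Finset.sum_mul_sum]
      apply Finset.sum_congr rfl; intro j _
      apply Finset.sum_congr rfl; intro j' _
      rw [map_mul]; ring
    calc ∑ a, (∑ j, u a j * x j) * (starRingEnd ℂ) (∑ j, u a j * x j)
        = ∑ j, ∑ j', (x j * (starRingEnd ℂ) (x j')) * ∑ a, ((starRingEnd ℂ) (u a j') * u a j) := by
          simp only [h1]
          rw [Finset.sum_comm]
          apply Finset.sum_congr rfl; intro j _
          rw [Finset.sum_comm]
          apply Finset.sum_congr rfl; intro j' _
          rw [Finset.mul_sum]
      _ = ∑ j, x j * (starRingEnd ℂ) (x j) := by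
          apply Finset.sum_congr rfl; intro j _
          simp [hu, Finset.sum_ite_eq]
  have : ((∑ a, Complex.normSq (∑ j, u a j * x j) : ℝ) : ℂ)
      = ((∑ j, Complex.normSq (x j) : ℝ) : ℂ) := by
    push_cast
    simpa only [Complex.mul_conj] using key
  exact_mod_cast this

lemma slice_key {r M I' : ℕ} (hI' : I' ≤ r)
    (u : Fin r → Fin r → ℂ) (v : Fin M → Fin M → ℂ) (s : Fin r → Fin M → ℂ)
    (hu2 : ∀ j j', ∑ i, (starRingEnd ℂ) (u i j) * u i j' = if j = j' then 1 else 0)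
    (hv2 : ∀ l l', ∑ m, (starRingEnd ℂ) (v m l) * v m l' = if l = l' then 1 else 0)
    (hs : ∀ (i : Fin r) (j : Fin M), (i:ℕ) ≠ (j:ℕ) → s i j = 0)
    (b : Fin r → Fin M → ℂ) (P : Fin r → Fin r → ℂ)
    (hb : ∀ i m, b i m = ∑ j, u i j * ∑ l, s j l * (starRingEnd ℂ) (v m l))
    (hP : ∀ a i, P a i = (if a = i then 1 else 0)
        - ∑ j : Fin I', u a (Fin.castLE hI' j) * (starRingEnd ℂ) (u i (Fin.castLE hI' j))) :
    ∑ a, ∑ m, Complex.normSq (∑ i, b i m * P a i)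
      = ∑ i ∈ Finset.univ.filter (fun i : Fin r => I' ≤ (i:ℕ)),
          Complex.normSq (if h : (i:ℕ) < M then s i ⟨(i:ℕ), h⟩ else 0) := by
  set t : Fin r → Fin M → ℂ := fun j m => ∑ l, s j l * (starRingEnd ℂ) (v m l) with ht
  have hPu : ∀ a j, ∑ i, P a i * u i j = if (j:ℕ) < I' then 0 else u a j := by
    intro a j
    have expand : ∑ i, P a i * u i j
        = (∑ i, (if a = i then 1 else 0) * u i j)
          - ∑ j' : Fin I', u a (Fin.castLE hI' j')
              * ∑ i, (starRingEnd ℂ) (u i (Fin.castLE hI' j')) * u i j := by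
      simp only [hP, sub_mul, Finset.sum_sub_distrib]
      congr 1
      calc ∑ i, (∑ j' : Fin I', u a (Fin.castLE hI' j')
              * (starRingEnd ℂ) (u i (Fin.castLE hI' j'))) * u i j
          = ∑ i, ∑ j' : Fin I', u a (Fin.castLE hI' j')
              * ((starRingEnd ℂ) (u i (Fin.castLE hI' j')) * u i j) := by
            simp [Finset.sum_mul, mul_assoc]
        _ = ∑ j' : Fin I', ∑ i, u a (Fin.castLE hI' j')
              * ((starRingEnd ℂ) (u i (Fin.castLE hI' j')) * u i j) := Finset.sum_comm
        _ = ∑ j' : Fin I', u a (Fin.castLE hI' j')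
              * ∑ i, (starRingEnd ℂ) (u i (Fin.castLE hI' j')) * u i j := by
            simp [Finset.mul_sum]
    rw [expand]
    have t1 : ∑ i, (if a = i then 1 else 0) * u i j = u a j := by simp
    rw [t1]
    simp only [hu2]
    by_cases h : (j:ℕ) < I'
    · rw [if_pos h, Finset.sum_eq_single (⟨(j:ℕ), h⟩ : Fin I')]
      · have hcl : Fin.castLE hI' (⟨(j:ℕ), h⟩ : Fin I') = j := Fin.ext rfl
        rw [hcl, if_pos rfl, mul_one, sub_self]
      · intro b' _ hb'
        have : ¬(Fin.castLE hI' b' = j) := by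
          intro hq
          exact hb' (Fin.ext (by simpa using congrArg Fin.val hq))
        rw [if_neg this, mul_zero]
      · simp
    · rw [if_neg h]
      have hz : ∀ j' : Fin I', ¬(Fin.castLE hI' j' = j) := by
        intro j' hq
        exact h (by simpa [← congrArg Fin.val hq] using j'.2)
      simp [hz]
  have entry : ∀ a m, ∑ i, b i m * P a i
      = ∑ j, u a j * (if (j:ℕ) < I' then 0 else t j m) := by
    intro a m
    calc ∑ i, b i m * P a i
        = ∑ i, ∑ j, (P a i * u i j) * t j m := by
          simp only [hb, ← ht]
          apply Finset.sum_congr rfl; intro i _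
          rw [Finset.sum_mul]
          apply Finset.sum_congr rfl; intro j _
          ring
      _ = ∑ j, (∑ i, P a i * u i j) * t j m := by
          rw [Finset.sum_comm]
          simp [Finset.sum_mul]
      _ = ∑ j, u a j * (if (j:ℕ) < I' then 0 else t j m) := by
          apply Finset.sum_congr rfl; intro j _
          rw [hPu]
          split <;> ring
  have hv2' : ∀ l l', ∑ m, (starRingEnd ℂ) ((starRingEnd ℂ) (v m l)) * (starRingEnd ℂ) (v m l')
      = if l = l' then 1 else 0 := by
    intro l l'
    have h := congrArg (starRingEnd ℂ) (hv2 l l')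
    simpa [map_sum, map_mul, apply_ite] using h
  calc ∑ a, ∑ m, Complex.normSq (∑ i, b i m * P a i)
      = ∑ m, ∑ a, Complex.normSq (∑ j, u a j * (if (j:ℕ) < I' then 0 else t j m)) := by
        rw [Finset.sum_comm]
        apply Finset.sum_congr rfl; intro m _
        apply Finset.sum_congr rfl; intro a _
        rw [entry]
    _ = ∑ m, ∑ j : Fin r, Complex.normSq (if (j:ℕ) < I' then 0 else t j m) := by
        apply Finset.sum_congr rfl; intro m _
        exact sum_normSq_ortho u hu2 _
    _ = ∑ j : Fin r, (if (j:ℕ) < I' then 0 else ∑ l, Complex.normSq (s j l)) := by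
        rw [Finset.sum_comm]
        apply Finset.sum_congr rfl; intro j _
        by_cases h : (j:ℕ) < I'
        · simp [h]
        · simp only [if_neg h]
          have : ∀ m, t j m = ∑ l, (starRingEnd ℂ) (v m l) * s j l := by
            intro m; simp [ht, mul_comm]
          simp only [this]
          exact sum_normSq_ortho (fun m l => (starRingEnd ℂ) (v m l)) hv2' (s j)
    _ = ∑ j : Fin r, (if (j:ℕ) < I' then 0
          else Complex.normSq (if h : (j:ℕ) < M then s j ⟨(j:ℕ), h⟩ else 0)) := by
        apply Finset.sum_congr rfl; intro j _
        by_cases h : (j:ℕ) < I'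
        · simp [h]
        · simp only [if_neg h]
          by_cases hm : (j:ℕ) < M
          · rw [dif_pos hm, Finset.sum_eq_single (⟨(j:ℕ), hm⟩ : Fin M)]
            · intro l _ hl
              have : (j:ℕ) ≠ (l:ℕ) := by
                intro hq; exact hl (Fin.ext hq.symm)
              rw [hs j l this, Complex.normSq_zero]
            · simp
          · rw [dif_neg hm, Complex.normSq_zero]
            apply Finset.sum_eq_zero
            intro l _
            have : (j:ℕ) ≠ (l:ℕ) := by omega
            rw [hs j l this, Complex.normSq_zero]
    _ = ∑ i ∈ Finset.univ.filter (fun i : Fin r => I' ≤ (i:ℕ)),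
          Complex.normSq (if h : (i:ℕ) < M then s i ⟨(i:ℕ), h⟩ else 0) := by
        rw [Finset.sum_filter]
        apply Finset.sum_congr rfl; intro j _
        by_cases h : (j:ℕ) < I' <;> simp [h, Nat.not_lt.mp, not_le.mpr]


variable {p : ℕ}

lemma L_tmul (L : TubalScalar p ≃ₗ[ℂ] TubalScalar p) (a b : TubalScalar p) (k : Fin p) :
    L (tmul L a b) k = L a k * L b k := by
  simp [tmul]

lemma L_tMul {I J K : Type*} [Fintype J] (L : TubalScalar p ≃ₗ[ℂ] TubalScalar p)
    (A : I → J → TubalScalar p) (B : J → K → TubalScalar p) (i : I) (k' : K) (k : Fin p) :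
    L ((tMul L A B) i k') k = ∑ j, L (A i j) k * L (B j k') k := by
  simp [tMul, map_sum, Finset.sum_apply, L_tmul]

lemma L_tHerm {I J : Type*} (L : TubalScalar p ≃ₗ[ℂ] TubalScalar p)
    (A : I → J → TubalScalar p) (j : J) (i : I) (k : Fin p) :
    L (tHerm L A j i) k = (starRingEnd ℂ) (L (A i j) k) := by
  simp [tHerm, Complex.star_def]

lemma L_tId {I : Type*} [DecidableEq I] (L : TubalScalar p ≃ₗ[ℂ] TubalScalar p)
    (i j : I) (k : Fin p) :
    L (tId L i j) k = if i = j then 1 else 0 := by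
  by_cases h : i = j <;> simp [tId, h]

lemma sum_normSq_L (L : TubalScalar p ≃ₗ[ℂ] TubalScalar p)
    (c : ℂ) (W : TubalScalar p →ₗ[ℂ] TubalScalar p)
    (hW : ∀ x y : TubalScalar p, ∑ k, star (W x k) * W y k = ∑ k, star (x k) * y k)
    (hLW : ∀ x, L x = c • W x) (x : TubalScalar p) :
    ∑ k, Complex.normSq (L x k) = Complex.normSq c * ∑ k, Complex.normSq (x k) := by
  have hrez : ∀ z : ℂ, (star z * z).re = Complex.normSq z := by
    intro z
    rw [Complex.star_def, mul_comm, Complex.mul_conj, Complex.ofReal_re]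
  have h1 : ∑ k, Complex.normSq (W x k) = ∑ k, Complex.normSq (x k) := by
    have h := congrArg Complex.re (hW x x)
    rw [Complex.re_sum, Complex.re_sum] at h
    simpa [hrez, Complex.normSq_apply] using h
  calc ∑ k, Complex.normSq (L x k) = ∑ k, Complex.normSq ((c • W x) k) := by
        simp [hLW]
    _ = ∑ k, Complex.normSq c * Complex.normSq (W x k) := by
        simp [Pi.smul_apply, smul_eq_mul, Complex.normSq_mul]
    _ = Complex.normSq c * ∑ k, Complex.normSq (x k) := by
        rw [← Finset.mul_sum, h1]

def packEquiv {N : ℕ} (I : Fin N → ℕ) (n : Fin N) :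
    (Fin (I n) × Cidx I n) ≃ ((m : Fin N) → Fin (Function.update I n (I n) m)) where
  toFun x := fun m =>
    if h : m = n then Fin.cast (by rw [h, Function.update_self]) x.1
    else Fin.cast (by rw [Function.update_of_ne h]) (x.2 ⟨m, h⟩)
  invFun idx :=
    (Fin.cast (by rw [Function.update_self]) (idx n),
     fun m => Fin.cast (by rw [Function.update_of_ne m.2]) (idx m.1))
  left_inv := by
    intro x
    refine Prod.ext ?_ ?_
    · apply Fin.ext; simp
    · funext m
      apply Fin.ext
      simp [m.2]
  right_inv := by
    intro idx
    funext m
    by_cases h : m = n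
    · subst h; apply Fin.ext; simp
    · apply Fin.ext; simp [h]

lemma modeProd_pack {N : ℕ} (L : TubalScalar p ≃ₗ[ℂ] TubalScalar p) (I : Fin N → ℕ)
    (A : ((m : Fin N) → Fin (I m)) → TubalScalar p) (n : Fin N)
    (P : Fin (I n) → Fin (I n) → TubalScalar p) (a : Fin (I n)) (c : Cidx I n) :
    modeProd L I A n (I n) P (packEquiv I n (a, c)) = ∑ i, tmul L (unfold I A n i c) (P a i) := by
  show (∑ i : Fin (I n), tmul L _ _) = _
  apply Finset.sum_congr rfl; intro i _
  refine congrArg₂ (fun X Y => tmul L X Y) ?_ ?_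
  · show A _ = A (insertAt n i c)
    apply congrArg
    funext m
    by_cases h : m = n
    · subst h
      apply Fin.ext
      simp [insertAt, packEquiv]
    · apply Fin.ext
      simp [insertAt, packEquiv, h]
  · show P _ i = P a i
    apply congrArg (fun z => P z i)
    apply Fin.ext
    simp [packEquiv]

lemma tnorm_sq {ι : Type*} [Fintype ι] (X : ι → TubalScalar p) :
    tnorm X ^ 2 = ∑ i, ∑ k, Complex.normSq (X i k) := by
  rw [tnorm, Real.sq_sqrt (by positivity)]
  simp [Complex.sq_norm]

lemma tnormS_sq (a : TubalScalar p) :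
    tnormS a ^ 2 = ∑ k, Complex.normSq (a k) := by
  rw [tnormS, Real.sq_sqrt (by positivity)]
  simp [Complex.sq_norm]

end Helpers

theorem truncation_residual {N : ℕ}
    (L : TubalScalar p ≃ₗ[ℂ] TubalScalar p)
    (c : ℂ) (W : TubalScalar p →ₗ[ℂ] TubalScalar p) (hc : c ≠ 0)
    (hW : ∀ x y : TubalScalar p, ∑ k, star (W x k) * W y k = ∑ k, star (x k) * y k)
    (hLW : ∀ x, L x = c • W x)
    (I : Fin N → ℕ) (A : ((m : Fin N) → Fin (I m)) → TubalScalar p)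
    (n : Fin N) (M : ℕ) (e : Cidx I n ≃ Fin M)
    (U : Fin (I n) → Fin (I n) → TubalScalar p)
    (Sig : Fin (I n) → Fin M → TubalScalar p)
    (V : Fin M → Fin M → TubalScalar p)
    (hU : tUnitary L U) (hV : tUnitary L V) (hdiag : fDiag Sig)
    (hfact : (fun i j => unfold I A n i (e.symm j))
        = tMul L U (tMul L Sig (tHerm L V)))
    (I' : ℕ) (hI'1 : 1 ≤ I') (hI' : I' ≤ I n) :
    tnorm (modeProd L I A n (I n)
        (tId L - tMul L (fun i (j : Fin I') => U i (Fin.castLE hI' j))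
          (tHerm L (fun i (j : Fin I') => U i (Fin.castLE hI' j))))) ^ 2
      = ∑ i ∈ Finset.univ.filter (fun i : Fin (I n) => I' ≤ (i : ℕ)),
          tnormS (sdiag Sig i) ^ 2 := by
  classical
  set Ubar : Fin (I n) → Fin I' → TubalScalar p := fun i j => U i (Fin.castLE hI' j) with hUbar
  set Pm : Fin (I n) → Fin (I n) → TubalScalar p :=
    tId L - tMul L Ubar (tHerm L Ubar) with hPm
  set X := modeProd L I A n (I n) Pm with hXdef
  have hKpos : Complex.normSq c ≠ 0 := fun h => hc (Complex.normSq_eq_zero.mp h)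
  rw [tnorm_sq, Finset.sum_congr rfl (fun i _ => tnormS_sq (sdiag Sig i))]
  apply mul_left_cancel₀ hKpos
  rw [Finset.mul_sum, Finset.mul_sum]
  have hscale : ∀ x : TubalScalar p,
      Complex.normSq c * ∑ k, Complex.normSq (x k) = ∑ k, Complex.normSq (L x k) :=
    fun x => (sum_normSq_L L c W hW hLW x).symm
  simp only [hscale]
  conv_lhs => rw [Finset.sum_comm]
  conv_rhs => rw [Finset.sum_comm]
  apply Finset.sum_congr rfl; intro k _
  -- slice-k data
  set u : Fin (I n) → Fin (I n) → ℂ := fun i j => L (U i j) k with hudef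
  set v : Fin M → Fin M → ℂ := fun i j => L (V i j) k with hvdef
  set s : Fin (I n) → Fin M → ℂ := fun i j => L (Sig i j) k with hsdef
  have hu2 : ∀ j j', ∑ i, (starRingEnd ℂ) (u i j) * u i j' = if j = j' then 1 else 0 := by
    intro j j'
    have h1 := congrFun (congrFun hU.2 j) j'
    have h2 := congrArg (fun z => L z k) h1
    simpa [L_tMul, L_tHerm, L_tId] using h2
  have hv2 : ∀ l l', ∑ m, (starRingEnd ℂ) (v m l) * v m l' = if l = l' then 1 else 0 := by
    intro l l'
    have h1 := congrFun (congrFun hV.2 l) l'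
    have h2 := congrArg (fun z => L z k) h1
    simpa [L_tMul, L_tHerm, L_tId] using h2
  have hsk : ∀ (i : Fin (I n)) (j : Fin M), (i:ℕ) ≠ (j:ℕ) → s i j = 0 := by
    intro i j h
    simp [hsdef, hdiag i j h]
  set b : Fin (I n) → Fin M → ℂ := fun i m => L (unfold I A n i (e.symm m)) k with hbdef
  have hb : ∀ i m, b i m = ∑ j, u i j * ∑ l, s j l * (starRingEnd ℂ) (v m l) := by
    intro i m
    have h1 := congrFun (congrFun hfact i) m
    have h2 := congrArg (fun z => L z k) h1
    simpa [L_tMul, L_tHerm] using h2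
  set Pc : Fin (I n) → Fin (I n) → ℂ := fun a i => L (Pm a i) k with hPcdef
  have hPc : ∀ a i, Pc a i = (if a = i then 1 else 0)
      - ∑ j : Fin I', u a (Fin.castLE hI' j) * (starRingEnd ℂ) (u i (Fin.castLE hI' j)) := by
    intro a i
    have h0 : Pm a i = tId L a i - (tMul L Ubar (tHerm L Ubar)) a i := rfl
    rw [hPcdef]
    simp only [h0, map_sub, Pi.sub_apply, L_tId, L_tMul, L_tHerm, hUbar]
    rfl
  calc ∑ idx, Complex.normSq (L (X idx) k)
      = ∑ q : Fin (I n) × Cidx I n, Complex.normSq (L (X (packEquiv I n q)) k) :=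
        (Equiv.sum_comp (packEquiv I n) _).symm
    _ = ∑ a, ∑ c' : Cidx I n, Complex.normSq (∑ i, L (unfold I A n i c') k * Pc a i) := by
        rw [Fintype.sum_prod_type]
        apply Finset.sum_congr rfl; intro a _
        apply Finset.sum_congr rfl; intro c' _
        congr 1
        rw [hXdef, modeProd_pack, map_sum, Finset.sum_apply]
        apply Finset.sum_congr rfl; intro i _
        rw [L_tmul]
    _ = ∑ a, ∑ m : Fin M, Complex.normSq (∑ i, b i m * Pc a i) := by
        apply Finset.sum_congr rfl; intro a _
        rw [← Equiv.sum_comp e (fun m => Complex.normSq (∑ i, b i m * Pc a i))]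
        apply Finset.sum_congr rfl; intro c' _
        simp [hbdef]
    _ = ∑ i ∈ Finset.univ.filter (fun i : Fin (I n) => I' ≤ (i:ℕ)),
          Complex.normSq (if h : (i:ℕ) < M then s i ⟨(i:ℕ), h⟩ else 0) :=
        slice_key hI' u v s hu2 hv2 hsk b Pc hb hPc
    _ = ∑ i ∈ Finset.univ.filter (fun i : Fin (I n) => I' ≤ (i:ℕ)),
          Complex.normSq (L (sdiag Sig i) k) := by
        apply Finset.sum_congr rfl; intro i _
        congr 1
        rw [sdiag]
        by_cases h : (i:ℕ) < M
        · simp [h, hsdef]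
        · simp [h]
end
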